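/- arXiv:0910.2376 — 4 statements merged into one kernel-verified Lean document; each statement's English description precedes it below -/
import Mathlib

section
/- For every n ≥ 1 and every k ≥ 0, the number of centrosymmetric 132-avoiding permutations of {1,…,2n} having exactly k descents equals the binomial coefficient C(n−1, ⌊k/2⌋). -/
/-- The value of the permutation `σ` of `{1,…,N}` (modeled on `Fin N`) at a
1-indexed position `i` (so `pval σ i ∈ {1,…,N}` for `1 ≤ i ≤ N`). -/
def pval {N : ℕ} (σ : Equiv.Perm (Fin N)) (i : ℕ) : ℕ :=
  if h : i - 1 < N then ((σ ⟨i - 1, h⟩ : ℕ) + 1) else 0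

/-- `σ` is centrosymmetric: `σ(i) + σ(N+1−i) = N+1` for all `1 ≤ i ≤ N`. -/
def IsCentro {N : ℕ} (σ : Equiv.Perm (Fin N)) : Prop :=
  ∀ i, 1 ≤ i → i ≤ N → pval σ i + pval σ (N + 1 - i) = N + 1

/-- `σ` avoids the pattern 132. -/
def Avoids132 {N : ℕ} (σ : Equiv.Perm (Fin N)) : Prop :=
  ¬ ∃ i j k, 1 ≤ i ∧ i < j ∧ j < k ∧ k ≤ N ∧
    pval σ i < pval σ k ∧ pval σ k < pval σ j

/-- `σ` avoids the pattern 123. -/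
def Avoids123 {N : ℕ} (σ : Equiv.Perm (Fin N)) : Prop :=
  ¬ ∃ i j k, 1 ≤ i ∧ i < j ∧ j < k ∧ k ≤ N ∧
    pval σ i < pval σ j ∧ pval σ j < pval σ k

/-- The number of descents of `σ`: positions `1 ≤ i ≤ N−1` with `σ(i) > σ(i+1)`. -/
noncomputable def des {N : ℕ} (σ : Equiv.Perm (Fin N)) : ℕ :=
  Nat.card {i : ℕ // 1 ≤ i ∧ i + 1 ≤ N ∧ pval σ (i + 1) < pval σ i}

namespace Stmt0Aux

variable {N : ℕ}

lemma pval_eq (σ : Equiv.Perm (Fin N)) {i : ℕ} (h1 : 1 ≤ i) (h2 : i ≤ N) :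
    pval σ i = (σ ⟨i - 1, by omega⟩ : ℕ) + 1 := by
  rw [pval, dif_pos]

lemma pval_pos (σ : Equiv.Perm (Fin N)) {i : ℕ} (h1 : 1 ≤ i) (h2 : i ≤ N) :
    1 ≤ pval σ i := by rw [pval_eq σ h1 h2]; omega

lemma pval_le (σ : Equiv.Perm (Fin N)) {i : ℕ} (h1 : 1 ≤ i) (h2 : i ≤ N) :
    pval σ i ≤ N := by
  rw [pval_eq σ h1 h2]
  have := (σ ⟨i - 1, by omega⟩).isLt; omega

lemma pval_injOn (σ : Equiv.Perm (Fin N)) {i j : ℕ} (hi1 : 1 ≤ i) (hi2 : i ≤ N)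
    (hj1 : 1 ≤ j) (hj2 : j ≤ N) (h : pval σ i = pval σ j) : i = j := by
  rw [pval_eq σ hi1 hi2, pval_eq σ hj1 hj2] at h
  have h2 : σ ⟨i - 1, by omega⟩ = σ ⟨j - 1, by omega⟩ := Fin.ext (by omega)
  have := σ.injective h2
  have := Fin.mk.injEq (i-1) (by omega : i - 1 < N) (j-1) (by omega) ▸ this
  omega

lemma pval_surj (σ : Equiv.Perm (Fin N)) {v : ℕ} (h1 : 1 ≤ v) (h2 : v ≤ N) :
    ∃ i, 1 ≤ i ∧ i ≤ N ∧ pval σ i = v := by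
  refine ⟨(σ.symm ⟨v - 1, by omega⟩ : ℕ) + 1, by omega, by have := (σ.symm ⟨v-1, by omega⟩).isLt; omega, ?_⟩
  rw [pval_eq σ (by omega) (by have := (σ.symm ⟨v-1, by omega⟩).isLt; omega)]
  have : (⟨(σ.symm ⟨v - 1, by omega⟩ : ℕ) + 1 - 1, by omega⟩ : Fin N) = σ.symm ⟨v - 1, by omega⟩ :=
    Fin.ext (by simp)
  rw [this, Equiv.apply_symm_apply]
  simp
  omega

/-- next descent position at or after `i` (or `N`) -/
def nxt (D : Finset ℕ) (N i : ℕ) : ℕ :=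
  (insert N (D.filter (fun d => i ≤ d))).min' (Finset.insert_nonempty _ _)

/-- previous descent position strictly before `i` (or `0`) -/
def prv (D : Finset ℕ) (i : ℕ) : ℕ :=
  (insert 0 (D.filter (fun d => d < i))).max' (Finset.insert_nonempty _ _)

lemma prv_lt {D : Finset ℕ} {i : ℕ} (h : 1 ≤ i) : prv D i < i := by
  rw [prv]
  apply Finset.max'_lt_iff _ _ |>.2
  intro y hy
  rcases Finset.mem_insert.1 hy with h' | h'
  · omega
  · exact (Finset.mem_filter.1 h').2

lemma le_nxt (D : Finset ℕ) {N i : ℕ} (h : i ≤ N) : i ≤ nxt D N i := by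
  rw [nxt]
  apply Finset.le_min'
  intro y hy
  rcases Finset.mem_insert.1 hy with h' | h'
  · omega
  · exact (Finset.mem_filter.1 h').2

lemma nxt_le (D : Finset ℕ) (N i : ℕ) : nxt D N i ≤ N :=
  Finset.min'_le _ _ (Finset.mem_insert_self _ _)

lemma prv_mem (D : Finset ℕ) (i : ℕ) : prv D i = 0 ∨ prv D i ∈ D := by
  have := Finset.max'_mem (insert 0 (D.filter (fun d => d < i))) (Finset.insert_nonempty _ _)
  rcases Finset.mem_insert.1 this with h | h
  · exact Or.inl h
  · exact Or.inr (Finset.mem_filter.1 h).1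

lemma nxt_mem (D : Finset ℕ) (N i : ℕ) : nxt D N i = N ∨ nxt D N i ∈ D := by
  have := Finset.min'_mem (insert N (D.filter (fun d => i ≤ d))) (Finset.insert_nonempty _ _)
  rcases Finset.mem_insert.1 this with h | h
  · exact Or.inl h
  · exact Or.inr (Finset.mem_filter.1 h).1

lemma le_prv {D : Finset ℕ} {i d : ℕ} (hd : d ∈ D) (h : d < i) : d ≤ prv D i := by
  have hm : d ∈ insert 0 (D.filter (fun x => x < i)) :=
    Finset.mem_insert_of_mem (Finset.mem_filter.2 ⟨hd, h⟩)
  exact Finset.le_max' _ _ hm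

lemma nxt_le_of {D : Finset ℕ} {N i d : ℕ} (hd : d ∈ D) (h : i ≤ d) : nxt D N i ≤ d := by
  have hm : d ∈ insert N (D.filter (fun x => i ≤ x)) :=
    Finset.mem_insert_of_mem (Finset.mem_filter.2 ⟨hd, h⟩)
  exact Finset.min'_le _ _ hm

lemma eq_prv {D : Finset ℕ} {i p : ℕ} (hp : p = 0 ∨ p ∈ D) (hpi : p < i)
    (hmax : ∀ d ∈ D, d < i → d ≤ p) : prv D i = p := by
  apply le_antisymm
  · apply Finset.max'_le
    intro y hy
    rcases Finset.mem_insert.1 hy with h | h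
    · omega
    · exact hmax y (Finset.mem_filter.1 h).1 (Finset.mem_filter.1 h).2
  · rcases hp with h | h
    · omega
    · exact le_prv h hpi

lemma eq_nxt {D : Finset ℕ} {N i q : ℕ} (hq : q = N ∨ q ∈ D) (hiq : i ≤ q) (hqN : q ≤ N)
    (hmin : ∀ d ∈ D, i ≤ d → q ≤ d) : nxt D N i = q := by
  apply le_antisymm
  · rcases hq with h | h
    · exact h ▸ nxt_le D N i
    · exact nxt_le_of h hiq
  · apply Finset.le_min'
    intro y hy
    rcases Finset.mem_insert.1 hy with h | h
    · omega
    · exact hmin y (Finset.mem_filter.1 h).1 (Finset.mem_filter.1 h).2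


/-- the formula for the value at position i of the reverse-layered permutation with descent set D -/
def fml (D : Finset ℕ) (N i : ℕ) : ℕ := N + i - prv D i - nxt D N i

lemma fml_bounds {D : Finset ℕ} {i : ℕ} (h1 : 1 ≤ i) (h2 : i ≤ N) :
    1 ≤ fml D N i ∧ fml D N i ≤ N := by
  have hp := prv_lt (D := D) h1
  have hq1 := le_nxt D h2
  have hq2 := nxt_le D N i
  rw [fml]; omega

/-- key case analysis: positions i<j are in the same run or not -/
lemma run_cases {D : Finset ℕ} (hD : D ⊆ Finset.Icc 1 (N-1)) {i j : ℕ}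
    (hi : 1 ≤ i) (hij : i < j) (hj : j ≤ N) :
    (prv D j = prv D i ∧ nxt D N j = nxt D N i ∧ fml D N j = fml D N i + (j - i)) ∨
    (nxt D N i ≤ prv D j ∧ fml D N j < fml D N i) := by
  have hpi := prv_lt (D := D) hi
  have hqi1 := le_nxt D (le_trans (le_of_lt hij) hj)
  have hqi2 := nxt_le D N i
  have hpj := prv_lt (D := D) (by omega : 1 ≤ j)
  have hqj1 := le_nxt D hj
  have hqj2 := nxt_le D N j
  by_cases hex : ∃ d ∈ D, i ≤ d ∧ d < j
  · right
    obtain ⟨d, hd, hd1, hd2⟩ := hex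
    have h1 : nxt D N i ≤ d := nxt_le_of hd hd1
    have h2 : d ≤ prv D j := le_prv hd hd2
    constructor
    · omega
    · rw [fml, fml]; omega
  · left
    push_neg at hex
    have hprv : prv D j = prv D i := by
      apply eq_prv (prv_mem D i) (by omega)
      intro d hd hdj
      by_cases hdi : d < i
      · exact le_prv hd hdi
      · exact absurd hdj (by have := hex d hd (by omega); omega)
    have hnxt : nxt D N j = nxt D N i := by
      apply eq_nxt (nxt_mem D N i) _ hqi2
      · intro d hd hjd
        exact nxt_le_of hd (by omega)
      · -- j ≤ nxt D N i
        by_contra hcon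
        push_neg at hcon
        rcases nxt_mem D N i with h | h
        · omega
        · have := hex _ h hqi1
          omega
    refine ⟨hprv, hnxt, ?_⟩
    rw [fml, fml, hprv, hnxt]
    -- need j ≤ nxt D N i : from hnxt and hqj1
    omega

lemma fml_injOn {D : Finset ℕ} (hD : D ⊆ Finset.Icc 1 (N-1)) {i j : ℕ}
    (hi1 : 1 ≤ i) (hi2 : i ≤ N) (hj1 : 1 ≤ j) (hj2 : j ≤ N)
    (h : fml D N i = fml D N j) : i = j := by
  rcases lt_trichotomy i j with hlt | heq | hgt
  · rcases run_cases hD hi1 hlt hj2 with ⟨_, _, h3⟩ | ⟨_, h2⟩ <;> omega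
  · exact heq
  · rcases run_cases hD hj1 hgt hi2 with ⟨_, _, h3⟩ | ⟨_, h2⟩ <;> omega

/-- the reverse-layered permutation with descent set D -/
noncomputable def mkPerm (D : Finset ℕ) (N : ℕ) (hD : D ⊆ Finset.Icc 1 (N-1)) :
    Equiv.Perm (Fin N) :=
  Equiv.ofBijective (fun x => ⟨fml D N (x.1 + 1) - 1, by
      have hx := x.isLt
      have := fml_bounds (D := D) (N := N) (i := x.1 + 1) (by omega) (by omega)
      omega⟩)
    (Finite.injective_iff_bijective.1 (by
      intro a b hab
      have h := Fin.mk.injEq _ _ _ _ ▸ hab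
      have ha := fml_bounds (D := D) (N := N) (i := a.1 + 1) (by omega) (by have := a.isLt; omega)
      have hb := fml_bounds (D := D) (N := N) (i := b.1 + 1) (by omega) (by have := b.isLt; omega)
      have : fml D N (a.1 + 1) = fml D N (b.1 + 1) := by
        have := congrArg Fin.val hab
        simp at this
        omega
      have := fml_injOn hD (by omega) (by have := a.isLt; omega) (by omega)
        (by have := b.isLt; omega) this
      exact Fin.ext (by omega)))

lemma pval_mkPerm {D : Finset ℕ} (hD : D ⊆ Finset.Icc 1 (N-1)) {i : ℕ}
    (h1 : 1 ≤ i) (h2 : i ≤ N) : pval (mkPerm D N hD) i = fml D N i := by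
  rw [pval_eq _ h1 h2, mkPerm]
  simp only [Equiv.ofBijective_apply]
  have h3 : i - 1 + 1 = i := by omega
  rw [h3]
  have := fml_bounds (D := D) (N := N) (i := i) h1 h2
  omega

/-- the descent set as a Finset -/
def descSet {N : ℕ} (σ : Equiv.Perm (Fin N)) : Finset ℕ :=
  (Finset.Icc 1 (N-1)).filter (fun i => pval σ (i+1) < pval σ i)

lemma descSet_subset (σ : Equiv.Perm (Fin N)) : descSet σ ⊆ Finset.Icc 1 (N-1) :=
  Finset.filter_subset _ _

lemma mem_descSet {σ : Equiv.Perm (Fin N)} {i : ℕ} :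
    i ∈ descSet σ ↔ (1 ≤ i ∧ i + 1 ≤ N ∧ pval σ (i+1) < pval σ i) := by
  simp only [descSet, Finset.mem_filter, Finset.mem_Icc]
  omega

lemma des_eq_card (σ : Equiv.Perm (Fin N)) : des σ = (descSet σ).card := by
  rw [des]
  have e : {i : ℕ // 1 ≤ i ∧ i + 1 ≤ N ∧ pval σ (i + 1) < pval σ i} ≃ {i // i ∈ descSet σ} :=
    Equiv.subtypeEquivRight (fun i => by rw [mem_descSet])
  rw [Nat.card_congr e, Nat.card_eq_fintype_card, Fintype.card_coe]

lemma descSet_mkPerm {D : Finset ℕ} (hD : D ⊆ Finset.Icc 1 (N-1)) :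
    descSet (mkPerm D N hD) = D := by
  ext i
  rw [mem_descSet]
  constructor
  · rintro ⟨h1, h2, h3⟩
    by_contra hiD
    rw [pval_mkPerm hD h1 (by omega), pval_mkPerm hD (by omega) (by omega)] at h3
    rcases run_cases hD h1 (by omega : i < i + 1) (by omega) with ⟨_, _, hf⟩ | ⟨hle, _⟩
    · omega
    · -- nxt i ≤ prv (i+1), but there's a descent d with i ≤ d < i+1, so d = i ∈ D
      have hp := prv_lt (D := D) (by omega : 1 ≤ i + 1)
      have hq := le_nxt D (by omega : i ≤ N)
      have : prv D (i+1) = i := by omega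
      rcases prv_mem D (i+1) with h | h
      · omega
      · exact hiD (this ▸ h)
  · intro hiD
    have hmem := Finset.mem_Icc.1 (hD hiD)
    have h1 : 1 ≤ i := hmem.1
    have h2 : i + 1 ≤ N := by omega
    refine ⟨h1, h2, ?_⟩
    rw [pval_mkPerm hD h1 (by omega), pval_mkPerm hD (by omega) (by omega)]
    have hpi := prv_lt (D := D) h1
    have hni : nxt D N i = i := eq_nxt (Or.inr hiD) le_rfl (by omega) (fun d _ h => h)
    have hpi1 : prv D (i+1) = i := eq_prv (Or.inr hiD) (by omega) (fun d _ h => by omega)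
    have hqi1 := le_nxt D (by omega : i + 1 ≤ N)
    have hqi2 := nxt_le D N (i+1)
    rw [fml, fml, hni, hpi1]
    omega

lemma avoids132_mkPerm {D : Finset ℕ} (hD : D ⊆ Finset.Icc 1 (N-1)) :
    Avoids132 (mkPerm D N hD) := by
  rintro ⟨i, j, k, hi, hij, hjk, hk, h1, h2⟩
  rw [pval_mkPerm hD hi (by omega)] at h1
  rw [pval_mkPerm hD (by omega) hk] at h1 h2
  rw [pval_mkPerm hD (by omega) (by omega : j ≤ N)] at h2
  rcases run_cases hD hi hij (by omega) with ⟨hpj, hqj, hfj⟩ | ⟨_, hfj⟩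
  · rcases run_cases hD hi (by omega : i < k) hk with ⟨hpk, hqk, hfk⟩ | ⟨_, hfk⟩
    · rcases run_cases hD (by omega : 1 ≤ j) hjk hk with ⟨_, _, hfjk⟩ | ⟨hle, _⟩
      · omega
      · -- same run for (i,j) and (i,k) but descent between j and k: contradiction
        have := prv_lt (D := D) (by omega : 1 ≤ i)
        have := le_nxt D (by omega : j ≤ N)
        rw [hpk] at hle; rw [hqj] at hle
        omega
    · omega
  · omega

lemma prv_reflect {D : Finset ℕ} (hD : D ⊆ Finset.Icc 1 (N-1))
    (hsym : ∀ d ∈ D, N - d ∈ D) {i : ℕ} (h1 : 1 ≤ i) (h2 : i ≤ N) :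
    prv D (N + 1 - i) = N - nxt D N i := by
  have hq1 := le_nxt D h2
  have hq2 := nxt_le D N i
  apply eq_prv
  · rcases nxt_mem D N i with h | h
    · left; omega
    · right; exact hsym _ h
  · omega
  · intro d hd hdlt
    have hmem := Finset.mem_Icc.1 (hD hd)
    have h3 : i ≤ N - d := by omega
    have := nxt_le_of (N := N) (hsym _ hd) h3
    omega

lemma nxt_reflect {D : Finset ℕ} (hD : D ⊆ Finset.Icc 1 (N-1))
    (hsym : ∀ d ∈ D, N - d ∈ D) {i : ℕ} (h1 : 1 ≤ i) (h2 : i ≤ N) :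
    nxt D N (N + 1 - i) = N - prv D i := by
  have hp := prv_lt (D := D) h1
  apply eq_nxt
  · rcases prv_mem D i with h | h
    · left; omega
    · right; exact hsym _ h
  · omega
  · omega
  · intro d hd hdge
    have hmem := Finset.mem_Icc.1 (hD hd)
    have h3 : N - d < i := by omega
    have := le_prv (hsym _ hd) h3
    omega

lemma isCentro_mkPerm {D : Finset ℕ} (hD : D ⊆ Finset.Icc 1 (N-1))
    (hsym : ∀ d ∈ D, N - d ∈ D) : IsCentro (mkPerm D N hD) := by
  intro i h1 h2
  rw [pval_mkPerm hD h1 h2, pval_mkPerm hD (by omega) (by omega)]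
  rw [fml, fml, prv_reflect hD hsym h1 h2, nxt_reflect hD hsym h1 h2]
  have hp := prv_lt (D := D) h1
  have hq1 := le_nxt D h2
  have hq2 := nxt_le D N i
  omega

lemma pval_reflect {σ : Equiv.Perm (Fin N)} (hc : IsCentro σ) {i : ℕ}
    (h1 : 1 ≤ i) (h2 : i ≤ N) : pval σ (N + 1 - i) = N + 1 - pval σ i := by
  have := hc i h1 h2
  have := pval_pos σ h1 h2
  omega

/-- every ascent is by exactly 1 -/
lemma ascent_step {σ : Equiv.Perm (Fin N)} (hc : IsCentro σ) (ha : Avoids132 σ)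
    {i : ℕ} (h1 : 1 ≤ i) (h2 : i + 1 ≤ N) (hasc : pval σ i < pval σ (i+1)) :
    pval σ (i+1) = pval σ i + 1 := by
  by_contra hne
  have hb1 := pval_pos σ h1 (by omega)
  have hb2 := pval_le σ (i := i+1) (by omega) h2
  -- the value pval σ i + 1 is somewhere, at position t
  obtain ⟨t, ht1, ht2, ht3⟩ := pval_surj σ (v := pval σ i + 1) (by omega) (by omega)
  have hti : t ≠ i := fun h => by rw [h] at ht3; omega
  have hti1 : t ≠ i + 1 := fun h => by rw [h] at ht3; omega
  rcases lt_trichotomy t i with hlt | heq | hgt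
  · -- 213 pattern at (t, i, i+1); reflect to get 132
    apply ha
    refine ⟨N - i, N + 1 - i, N + 1 - t, by omega, by omega, by omega, by omega, ?_, ?_⟩
    · have e1 : N - i = N + 1 - (i + 1) := by omega
      rw [e1, pval_reflect hc (by omega) h2, pval_reflect hc ht1 (by omega), ht3]
      omega
    · rw [pval_reflect hc ht1 (by omega), pval_reflect hc h1 (by omega), ht3]
      omega
  · omega
  · -- 132 pattern at (i, i+1, t)
    exact ha ⟨i, i+1, t, h1, by omega, by omega, ht2, by omega, by omega⟩

/-- values increase by 1 along a descent-free stretch -/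
lemma run_values {σ : Equiv.Perm (Fin N)} (hc : IsCentro σ) (ha : Avoids132 σ)
    {i j : ℕ} (h1 : 1 ≤ i) (hij : i ≤ j) (hj : j ≤ N)
    (hnd : ∀ t, i ≤ t → t < j → t ∉ descSet σ) :
    pval σ j = pval σ i + (j - i) := by
  induction j, hij using Nat.le_induction with
  | base => omega
  | succ j hij ih =>
    have hj' : j ≤ N := by omega
    have hjd : j ∉ descSet σ := hnd j hij (by omega)
    have hrec := ih hj' (fun t ht1 ht2 => hnd t ht1 (by omega))
    have hnotlt : ¬ (pval σ (j+1) < pval σ j) := by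
      intro h
      exact hjd (mem_descSet.2 ⟨by omega, by omega, h⟩)
    have hne : pval σ (j+1) ≠ pval σ j := fun h =>
      by have := pval_injOn σ (by omega) (by omega) (by omega) hj' h; omega
    have := ascent_step hc ha (by omega : 1 ≤ j) (by omega) (by omega)
    omega

/-- after a (maximal) descent, values are smaller -/
lemma desc_drop {σ : Equiv.Perm (Fin N)} (hc : IsCentro σ) (ha : Avoids132 σ)
    {i j d : ℕ} (h1 : 1 ≤ i) (hid : i ≤ d) (hdj : d < j) (hj : j ≤ N)
    (hd : d ∈ descSet σ) (hmax : ∀ t ∈ descSet σ, t < j → t ≤ d) :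
    pval σ j < pval σ i := by
  have hdd := mem_descSet.1 hd
  have hrun : pval σ j = pval σ (d+1) + (j - (d+1)) :=
    run_values hc ha (by omega) (by omega) hj
      (fun t ht1 ht2 htD => by have := hmax t htD (by omega); omega)
  rcases lt_trichotomy (pval σ (d+1)) (pval σ i) with hlt | heq | hgt
  · -- need pval σ j < pval σ i
    by_contra hcon
    push_neg at hcon
    set t := d + 1 + (pval σ i - pval σ (d+1)) with hT
    have ht1 : t ≤ j := by omega
    have htv : pval σ t = pval σ i := by
      have := run_values hc ha (i := d+1) (j := t) (by omega) (by omega) (by omega)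
        (fun s hs1 hs2 hsD => by have := hmax s hsD (by omega); omega)
      omega
    have := pval_injOn σ (by omega) (by omega) h1 (by omega) htv
    omega
  · have := pval_injOn σ (by omega) (by omega) h1 (by omega) heq
    omega
  · -- 132 pattern at (i, d, d+1)
    have hine : i ≠ d := fun h => by rw [h] at hgt; omega
    exact absurd ⟨i, d, d+1, h1, by omega, by omega, by omega, by omega, by omega⟩ ha

/-- the master formula: a centrosymmetric 132-avoiding permutation is given by `fml` of
its descent set -/
lemma pval_eq_fml {σ : Equiv.Perm (Fin N)} (hc : IsCentro σ) (ha : Avoids132 σ)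
    {i : ℕ} (h1 : 1 ≤ i) (h2 : i ≤ N) :
    pval σ i = fml (descSet σ) N i := by
  have hDsub := descSet_subset σ
  have hp1 : prv (descSet σ) i < i := prv_lt h1
  have hq1 : i ≤ nxt (descSet σ) N i := le_nxt _ h2
  have hq2 : nxt (descSet σ) N i ≤ N := nxt_le _ N i
  -- characterize positions with larger values
  have key : ∀ j, 1 ≤ j → j ≤ N →
      (pval σ i < pval σ j ↔ (j ≤ prv (descSet σ) i ∨ (i < j ∧ j ≤ nxt (descSet σ) N i))) := by
    intro j hj1 hj2
    constructor
    · intro hgt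
      by_contra hcon
      push_neg at hcon
      rcases lt_trichotomy j i with hlt | heq | hgt'
      · -- p < j < i (since j > p), no descent in [j, i)
        have hjp : prv (descSet σ) i < j := by omega
        have : pval σ i = pval σ j + (i - j) :=
          run_values hc ha hj1 (by omega) h2
            (fun t ht1 ht2 htD => by
              have h5 : t ≤ prv (descSet σ) i := le_prv htD (by omega : t < i); omega)
        omega
      · rw [heq] at hgt; omega
      · -- j > i; from hcon, j > q; descent at q
        have hjq : nxt (descSet σ) N i < j := by omega
        have hqD : nxt (descSet σ) N i ∈ descSet σ := by
          rcases nxt_mem (descSet σ) N i with h | h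
          · omega
          · exact h
        have h7 : nxt (descSet σ) N i ≤ prv (descSet σ) j := le_prv hqD hjq
        have hpj1 : prv (descSet σ) j < j := prv_lt (by omega : 1 ≤ j)
        have hpjD : prv (descSet σ) j ∈ descSet σ := by
          rcases prv_mem (descSet σ) j with h | h
          · omega
          · exact h
        have := desc_drop hc ha h1 (by omega : i ≤ prv (descSet σ) j) hpj1 hj2 hpjD
          (fun t htD htj => le_prv htD htj)
        omega
    · intro hcase
      rcases hcase with hjp | ⟨hij, hjq⟩
      · -- j ≤ p, descent at p ∈ [j, i)
        have hpD : prv (descSet σ) i ∈ descSet σ := by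
          rcases prv_mem (descSet σ) i with h | h
          · omega
          · exact h
        exact desc_drop hc ha hj1 hjp hp1 h2 hpD
          (fun t htD hti => le_prv htD hti)
      · -- i < j ≤ q : same run
        have : pval σ j = pval σ i + (j - i) :=
          run_values hc ha h1 (by omega) hj2
            (fun t ht1 ht2 htD => by
              have h5 : nxt (descSet σ) N i ≤ t := nxt_le_of htD ht1; omega)
        omega
  -- now count
  have hvi1 := pval_pos σ h1 h2
  have hvi2 := pval_le σ h1 h2
  set s : Finset ℕ := (Finset.Icc 1 N).filter (fun j => pval σ i < pval σ j) with hs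
  have hseq : s = Finset.Icc 1 (prv (descSet σ) i) ∪ Finset.Icc (i+1) (nxt (descSet σ) N i) := by
    ext j
    simp only [hs, Finset.mem_filter, Finset.mem_Icc, Finset.mem_union]
    constructor
    · rintro ⟨⟨hj1, hj2⟩, hgt⟩
      rcases (key j hj1 hj2).1 hgt with h | h
      · left; omega
      · right; omega
    · intro h
      have hj1 : 1 ≤ j := by omega
      have hj2 : j ≤ N := by omega
      refine ⟨⟨hj1, hj2⟩, (key j hj1 hj2).2 ?_⟩
      omega
  have hcard1 : s.card = prv (descSet σ) i + (nxt (descSet σ) N i - i) := by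
    rw [hseq, Finset.card_union_of_disjoint, Nat.card_Icc, Nat.card_Icc]
    · omega
    · rw [Finset.disjoint_left]
      intro a ha1 ha2
      simp only [Finset.mem_Icc] at ha1 ha2
      omega
  have hcard2 : s.card = N - pval σ i := by
    have himg : s.image (pval σ) = Finset.Ioc (pval σ i) N := by
      ext v
      simp only [Finset.mem_image, Finset.mem_Ioc]
      constructor
      · rintro ⟨j, hjs, rfl⟩
        simp only [hs, Finset.mem_filter, Finset.mem_Icc] at hjs
        exact ⟨hjs.2, pval_le σ hjs.1.1 hjs.1.2⟩
      · rintro ⟨hv1, hv2⟩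
        obtain ⟨j, hj1, hj2, hj3⟩ := pval_surj σ (v := v) (by omega) hv2
        exact ⟨j, by simp only [hs, Finset.mem_filter, Finset.mem_Icc]; omega, hj3⟩
    have hinj : Set.InjOn (pval σ) s := by
      intro a hab b hbb hab2
      simp only [hs, Finset.coe_filter, Set.mem_setOf_eq, Finset.mem_Icc] at hab hbb
      exact pval_injOn σ hab.1.1 hab.1.2 hbb.1.1 hbb.1.2 hab2
    have := Finset.card_image_of_injOn hinj
    rw [himg, Nat.card_Ioc] at this
    omega
  rw [fml]
  omega

/-- centrosymmetry makes the descent set symmetric -/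
lemma descSet_symm {σ : Equiv.Perm (Fin N)} (hc : IsCentro σ) :
    ∀ d ∈ descSet σ, N - d ∈ descSet σ := by
  intro d hd
  obtain ⟨h1, h2, h3⟩ := mem_descSet.1 hd
  refine mem_descSet.2 ⟨by omega, by omega, ?_⟩
  have e1 : N - d + 1 = N + 1 - d := by omega
  have e2 : N - d = N + 1 - (d + 1) := by omega
  rw [e1, pval_reflect hc h1 (by omega), e2, pval_reflect hc (by omega) h2]
  have := pval_pos σ h1 (by omega : d ≤ N)
  have := pval_le σ (i := d+1) (by omega) h2
  omega

lemma perm_eq_of_pval {σ τ : Equiv.Perm (Fin N)}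
    (h : ∀ i, 1 ≤ i → i ≤ N → pval σ i = pval τ i) : σ = τ := by
  apply Equiv.ext
  intro x
  have hx := x.isLt
  have := h (x.1 + 1) (by omega) (by omega)
  rw [pval_eq σ (by omega) (by omega), pval_eq τ (by omega) (by omega)] at this
  have e : ∀ (h : x.1 + 1 - 1 < N), (⟨x.1 + 1 - 1, h⟩ : Fin N) = x :=
    fun h => Fin.ext (by simp)
  rw [e] at this
  exact Fin.ext (by omega)

noncomputable def equivT12 (n k : ℕ) :
    {σ : Equiv.Perm (Fin (2*n)) // IsCentro σ ∧ Avoids132 σ ∧ des σ = k} ≃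
    {D : Finset ℕ // D ⊆ Finset.Icc 1 (2*n-1) ∧ (∀ d ∈ D, 2*n - d ∈ D) ∧ D.card = k} where
  toFun s := ⟨descSet s.1, descSet_subset _, descSet_symm s.2.1,
    by rw [← des_eq_card]; exact s.2.2.2⟩
  invFun t := ⟨mkPerm t.1 (2*n) t.2.1, isCentro_mkPerm t.2.1 t.2.2.1,
    avoids132_mkPerm t.2.1, by rw [des_eq_card, descSet_mkPerm]; exact t.2.2.2⟩
  left_inv s := by
    apply Subtype.ext
    apply perm_eq_of_pval
    intro i h1 h2
    rw [pval_mkPerm _ h1 h2, ← pval_eq_fml s.2.1 s.2.2.1 h1 h2]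
  right_inv t := Subtype.ext (descSet_mkPerm t.2.1)

lemma sym_card_parity {n : ℕ} {D : Finset ℕ} (hD : D ⊆ Finset.Icc 1 (2*n-1))
    (hsym : ∀ d ∈ D, 2*n - d ∈ D) :
    D.card = 2 * (D.filter (fun d => d < n)).card + (if n ∈ D then 1 else 0) := by
  have hsplit := Finset.card_filter_add_card_filter_not
    (s := D) (p := fun d => d < n)
  have hun : D.filter (fun d => ¬ d < n) =
      (D.filter (fun d => n < d)) ∪ (D.filter (fun d => d = n)) := by
    ext d
    simp only [Finset.mem_filter, Finset.mem_union]
    by_cases hd : d ∈ D <;> simp [hd] <;> omega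
  have hdisj : Disjoint (D.filter (fun d => n < d)) (D.filter (fun d => d = n)) := by
    rw [Finset.disjoint_left]
    intro a h1 h2
    simp only [Finset.mem_filter] at h1 h2
    omega
  have heqcard : (D.filter (fun d => n < d)).card = (D.filter (fun d => d < n)).card := by
    apply Finset.card_bij' (i := fun d _ => 2*n - d) (j := fun d _ => 2*n - d)
    · intro a ha
      simp only [Finset.mem_filter] at ha ⊢
      have hm := Finset.mem_Icc.1 (hD ha.1)
      exact ⟨hsym _ ha.1, by omega⟩
    · intro a ha
      simp only [Finset.mem_filter] at ha ⊢
      have hm := Finset.mem_Icc.1 (hD ha.1)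
      exact ⟨hsym _ ha.1, by omega⟩
    · intro a ha
      simp only [Finset.mem_filter] at ha
      have hm := Finset.mem_Icc.1 (hD ha.1)
      omega
    · intro a ha
      simp only [Finset.mem_filter] at ha
      have hm := Finset.mem_Icc.1 (hD ha.1)
      omega
  have hsing : (D.filter (fun d => d = n)).card = (if n ∈ D then 1 else 0) := by
    rw [Finset.filter_eq']
    split <;> simp
  rw [hun, Finset.card_union_of_disjoint hdisj, heqcard, hsing] at hsplit
  omega

noncomputable def equivT23 (n k : ℕ) (hn : 1 ≤ n) :
    {D : Finset ℕ // D ⊆ Finset.Icc 1 (2*n-1) ∧ (∀ d ∈ D, 2*n - d ∈ D) ∧ D.card = k} ≃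
    {S : Finset ℕ // S ⊆ Finset.Icc 1 (n-1) ∧ S.card = k / 2} where
  toFun t := ⟨t.1.filter (fun d => d < n), by
      intro d hd
      simp only [Finset.mem_filter] at hd
      have := Finset.mem_Icc.1 (t.2.1 hd.1)
      exact Finset.mem_Icc.2 (by omega), by
      have := sym_card_parity t.2.1 t.2.2.1
      rw [t.2.2.2] at this
      split at this <;> omega⟩
  invFun s := ⟨(s.1 ∪ s.1.image (fun x => 2*n - x)) ∪ (if k % 2 = 1 then {n} else ∅), by
      -- subset
      intro d hd
      simp only [Finset.mem_union, Finset.mem_image] at hd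
      rcases hd with (h | ⟨x, hx, rfl⟩) | h
      · have := Finset.mem_Icc.1 (s.2.1 h); exact Finset.mem_Icc.2 (by omega)
      · have := Finset.mem_Icc.1 (s.2.1 hx); exact Finset.mem_Icc.2 (by omega)
      · split at h
        · simp only [Finset.mem_singleton] at h; exact Finset.mem_Icc.2 (by omega)
        · simp at h, by
      -- symmetric
      intro d hd
      simp only [Finset.mem_union, Finset.mem_image] at hd ⊢
      rcases hd with (h | ⟨x, hx, rfl⟩) | h
      · exact Or.inl (Or.inr ⟨d, h, rfl⟩)
      · have := Finset.mem_Icc.1 (s.2.1 hx)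
        have e : 2*n - (2*n - x) = x := by omega
        exact Or.inl (Or.inl (by rw [e]; exact hx))
      · split at h
        next hk =>
          simp only [Finset.mem_singleton] at h
          right
          rw [if_pos hk]
          simp only [Finset.mem_singleton]
          omega
        next => simp at h, by
      -- card
      have hd1 : Disjoint s.1 (s.1.image (fun x => 2*n - x)) := by
        rw [Finset.disjoint_left]
        intro a ha ha2
        simp only [Finset.mem_image] at ha2
        obtain ⟨x, hx, he⟩ := ha2
        have := Finset.mem_Icc.1 (s.2.1 hx)
        have := Finset.mem_Icc.1 (s.2.1 ha)
        omega
      have hd2 : Disjoint (s.1 ∪ s.1.image (fun x => 2*n - x))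
          (if k % 2 = 1 then ({n} : Finset ℕ) else ∅) := by
        rw [Finset.disjoint_left]
        intro a ha ha2
        split at ha2
        · simp only [Finset.mem_singleton] at ha2
          subst ha2
          simp only [Finset.mem_union, Finset.mem_image] at ha
          rcases ha with h | ⟨x, hx, he⟩
          · have := Finset.mem_Icc.1 (s.2.1 h); omega
          · have := Finset.mem_Icc.1 (s.2.1 hx); omega
        · simp at ha2
      have himg : (s.1.image (fun x => 2*n - x)).card = s.1.card := by
        apply Finset.card_image_of_injOn
        intro a ha b hb he
        have := Finset.mem_Icc.1 (s.2.1 ha)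
        have := Finset.mem_Icc.1 (s.2.1 hb)
        simp only at he
        omega
      rw [Finset.card_union_of_disjoint hd2, Finset.card_union_of_disjoint hd1, himg, s.2.2]
      have : (if k % 2 = 1 then ({n} : Finset ℕ) else ∅).card = k % 2 := by
        split <;> simp <;> omega
      rw [this]
      omega⟩
  left_inv t := by
    apply Subtype.ext
    have hpar := sym_card_parity t.2.1 t.2.2.1
    rw [t.2.2.2] at hpar
    have hnD : n ∈ t.1 ↔ k % 2 = 1 := by
      split at hpar
      · simp_all
      · constructor
        · intro h; simp_all
        · intro h; omega
    ext d
    simp only [Finset.mem_union, Finset.mem_image, Finset.mem_filter]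
    constructor
    · rintro ((⟨h, _⟩ | ⟨x, ⟨hx, hxn⟩, rfl⟩) | h)
      · exact h
      · exact t.2.2.1 _ hx
      · split at h
        · simp only [Finset.mem_singleton] at h
          subst h
          exact hnD.2 (by assumption)
        · simp at h
    · intro hd
      have hm := Finset.mem_Icc.1 (t.2.1 hd)
      rcases lt_trichotomy d n with h | h | h
      · exact Or.inl (Or.inl ⟨hd, h⟩)
      · subst h
        right
        rw [hnD.1 hd]
        simp
      · refine Or.inl (Or.inr ⟨2*n - d, ⟨t.2.2.1 _ hd, by omega⟩, by omega⟩)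
  right_inv s := by
    apply Subtype.ext
    ext d
    simp only [Finset.mem_filter, Finset.mem_union, Finset.mem_image]
    constructor
    · rintro ⟨(h | ⟨x, hx, rfl⟩) | h, hdn⟩
      · exact h
      · have := Finset.mem_Icc.1 (s.2.1 hx); omega
      · split at h
        · simp only [Finset.mem_singleton] at h; omega
        · simp at h
    · intro hd
      have := Finset.mem_Icc.1 (s.2.1 hd)
      exact ⟨Or.inl (Or.inl hd), by omega⟩

end Stmt0Aux

open Stmt0Aux in
/-- For every `n ≥ 1` and `k ≥ 0`, the number of centrosymmetric
132-avoiding permutations of `{1,…,2n}` with exactly `k` descents is `C(n−1, ⌊k/2⌋)`. -/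
theorem stmt0 (n k : ℕ) (hn : 1 ≤ n) :
    Nat.card {σ : Equiv.Perm (Fin (2 * n)) // IsCentro σ ∧ Avoids132 σ ∧ des σ = k}
      = Nat.choose (n - 1) (k / 2) := by
  rw [Nat.card_congr ((equivT12 n k).trans (equivT23 n k hn))]
  have e : {S : Finset ℕ // S ⊆ Finset.Icc 1 (n-1) ∧ S.card = k / 2} ≃
      {S // S ∈ Finset.powersetCard (k/2) (Finset.Icc 1 (n-1))} :=
    Equiv.subtypeEquivRight (fun S => (Finset.mem_powersetCard).symm)
  rw [Nat.card_congr e, Nat.card_eq_fintype_card, Fintype.card_coe,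
    Finset.card_powersetCard, Nat.card_Icc]
  simp
end

section
/- For every n ≥ 1 and every k ≥ 0, the number of centrosymmetric 132-avoiding permutations of {1,…,2n+1} having exactly k descents equals C(n, k/2) if k is even, and equals 0 if k is odd. -/
namespace CS132

/-- largest cut ≤ i, default 0 -/
def cA (C : Finset ℕ) (i : ℕ) : ℕ :=
  if h : (C.filter (fun c => c ≤ i)).Nonempty then (C.filter (fun c => c ≤ i)).max' h else 0

/-- smallest cut > i, default N -/
def cB (C : Finset ℕ) (N i : ℕ) : ℕ :=
  if h : (C.filter (fun c => i < c)).Nonempty then (C.filter (fun c => i < c)).min' h else N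

def fval (C : Finset ℕ) (N i : ℕ) : ℕ := N - cB C N i + (i - cA C i)

lemma cA_le (C : Finset ℕ) (i : ℕ) : cA C i ≤ i := by
  unfold cA; split
  · next h => have := Finset.max'_mem _ h; simp only [Finset.mem_filter] at this; exact this.2
  · omega

lemma cA_mem (C : Finset ℕ) (i : ℕ) : cA C i = 0 ∨ cA C i ∈ C := by
  unfold cA; split
  · next h =>
    right; have := Finset.max'_mem _ h; simp only [Finset.mem_filter] at this; exact this.1
  · left; rfl

lemma le_cA {C : Finset ℕ} {i c : ℕ} (hc : c ∈ C) (hci : c ≤ i) : c ≤ cA C i := by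
  have hmem : c ∈ C.filter (fun c => c ≤ i) := Finset.mem_filter.mpr ⟨hc, hci⟩
  unfold cA; split
  · next h => exact Finset.le_max' _ _ hmem
  · next h => exact absurd ⟨c, hmem⟩ h

lemma lt_cB (C : Finset ℕ) {N i : ℕ} (hiN : i < N) : i < cB C N i := by
  unfold cB; split
  · next h => have := Finset.min'_mem _ h; simp only [Finset.mem_filter] at this; exact this.2
  · exact hiN

lemma lt_cB_any (C : Finset ℕ) (N i : ℕ) : i < cB C N i ∨ cB C N i = N := by
  unfold cB; split
  · next h =>
    left; have := Finset.min'_mem _ h; simp only [Finset.mem_filter] at this; exact this.2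
  · right; rfl

lemma cB_mem (C : Finset ℕ) (N i : ℕ) : cB C N i = N ∨ cB C N i ∈ C := by
  unfold cB; split
  · next h =>
    right; have := Finset.min'_mem _ h; simp only [Finset.mem_filter] at this; exact this.1
  · left; rfl

lemma cB_le {C : Finset ℕ} {N i c : ℕ} (hc : c ∈ C) (hci : i < c) : cB C N i ≤ c := by
  have hmem : c ∈ C.filter (fun c => i < c) := Finset.mem_filter.mpr ⟨hc, hci⟩
  unfold cB; split
  · next h => exact Finset.min'_le _ _ hmem
  · next h => exact absurd ⟨c, hmem⟩ h

lemma cB_le_N {C : Finset ℕ} {N : ℕ} (hCN : ∀ c ∈ C, c ≤ N) (i : ℕ) : cB C N i ≤ N := by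
  rcases cB_mem C N i with h | h
  · omega
  · exact hCN _ h

lemma cA_eq {C : Finset ℕ} {i x : ℕ} (h1 : x ≤ i) (h2 : x = 0 ∨ x ∈ C)
    (h3 : ∀ c ∈ C, c ≤ i → c ≤ x) : cA C i = x := by
  apply le_antisymm
  · rcases cA_mem C i with h | h
    · omega
    · exact h3 _ h (cA_le C i)
  · rcases h2 with h | h
    · omega
    · exact le_cA h h1

lemma cB_eq {C : Finset ℕ} {N i x : ℕ} (hCN : ∀ c ∈ C, c ≤ N) (h1 : i < x) (hxN : x ≤ N)
    (h2 : x = N ∨ x ∈ C) (h3 : ∀ c ∈ C, i < c → x ≤ c) : cB C N i = x := by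
  apply le_antisymm
  · rcases h2 with h | h
    · have := cB_le_N hCN i; omega
    · exact cB_le h h1
  · rcases cB_mem C N i with h | h
    · omega
    · exact h3 _ h (lt_cB C (by omega))

lemma cA_block {C : Finset ℕ} {N i j : ℕ} (h1 : cA C i ≤ j) (h2 : j < cB C N i) :
    cA C j = cA C i := by
  apply cA_eq h1 (cA_mem C i)
  intro c hc hcj
  by_cases hci : c ≤ i
  · exact le_cA hc hci
  · have := cB_le (N := N) hc (show i < c by omega); omega

lemma cB_block {C : Finset ℕ} {N i j : ℕ} (hCN : ∀ c ∈ C, c ≤ N)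
    (h1 : cA C i ≤ j) (h2 : j < cB C N i) : cB C N j = cB C N i := by
  apply cB_eq hCN h2 (cB_le_N hCN i) (cB_mem C N i)
  intro c hc hcj
  by_cases hci : i < c
  · exact cB_le hc hci
  · have := le_cA hc (show c ≤ i by omega); omega

lemma fval_lt {C : Finset ℕ} {N : ℕ} (hCN : ∀ c ∈ C, c ≤ N) {i : ℕ} (hiN : i < N) :
    fval C N i < N := by
  have h1 := cA_le C i
  have h2 := lt_cB C (N := N) hiN
  have h3 := cB_le_N hCN i
  unfold fval; omega

lemma fval_cross {C : Finset ℕ} {N i j : ℕ} (hCN : ∀ c ∈ C, c ≤ N)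
    (hij : cB C N i ≤ j) (hj : j < N) : fval C N j < fval C N i := by
  have hBmem : cB C N i ∈ C := by
    rcases cB_mem C N i with h | h
    · omega
    · exact h
  have h1 : cB C N i ≤ cA C j := le_cA hBmem hij
  have h2 := cA_le C j
  have h3 := lt_cB C (N := N) hj
  have h4 := cB_le_N hCN j
  have h5 := cA_le C i
  have h6 : i < cB C N i := by rcases lt_cB_any C N i with h | h <;> omega
  unfold fval
  omega

lemma fval_block {C : Finset ℕ} {N i j : ℕ} (hCN : ∀ c ∈ C, c ≤ N)
    (hij : i < j) (hj : j < cB C N i) : fval C N i < fval C N j := by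
  have h1 : cA C i ≤ j := le_trans (cA_le C i) hij.le
  have hA := cA_block (N := N) h1 hj
  have hB := cB_block hCN h1 hj
  have h2 := cA_le C i
  have h3 := cB_le_N hCN i
  unfold fval
  rw [hA, hB]
  omega

lemma fval_tri {C : Finset ℕ} {N i j : ℕ} (hCN : ∀ c ∈ C, c ≤ N) (hij : i < j) (hj : j < N) :
    (cA C j = cA C i ∧ cB C N j = cB C N i ∧ fval C N i < fval C N j) ∨
    (cB C N i ≤ j ∧ fval C N j < fval C N i) := by
  by_cases h : cB C N i ≤ j
  · exact Or.inr ⟨h, fval_cross hCN h hj⟩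
  · have h1 : cA C i ≤ j := le_trans (cA_le C i) hij.le
    exact Or.inl ⟨cA_block (N := N) h1 (by omega), cB_block hCN h1 (by omega),
      fval_block hCN hij (by omega)⟩

lemma fval_inj {C : Finset ℕ} {N : ℕ} (hCN : ∀ c ∈ C, c ≤ N) {i j : ℕ}
    (hi : i < N) (hj : j < N) (h : fval C N i = fval C N j) : i = j := by
  rcases lt_trichotomy i j with hlt | he | hgt
  · rcases fval_tri hCN hlt hj with ⟨_, _, h2⟩ | ⟨_, h2⟩ <;> omega
  · exact he
  · rcases fval_tri hCN hgt hi with ⟨_, _, h2⟩ | ⟨_, h2⟩ <;> omega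

/-- reflection of cA, for symmetric cut sets -/
lemma cA_reflect {C : Finset ℕ} {N i : ℕ} (hC : ∀ c ∈ C, 1 ≤ c ∧ c ≤ N - 1)
    (hsym : ∀ c ∈ C, N - c ∈ C) (hi : i < N) :
    cA C (N - 1 - i) = N - cB C N i := by
  have hCN : ∀ c ∈ C, c ≤ N := fun c hc => by have := hC c hc; omega
  have hble := cB_le_N hCN i
  have hblt := lt_cB C (N := N) hi
  apply cA_eq
  · omega
  · rcases cB_mem C N i with h | h
    · left; omega
    · right; exact hsym _ h
  · intro c hc hcle
    by_contra hcon
    have h1 := hC c hc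
    have h2 : N - c ∈ C := hsym c hc
    have h3 : i < N - c := by omega
    have h4 := cB_le (N := N) h2 h3
    omega

lemma cB_reflect {C : Finset ℕ} {N i : ℕ} (hC : ∀ c ∈ C, 1 ≤ c ∧ c ≤ N - 1)
    (hsym : ∀ c ∈ C, N - c ∈ C) (hi : i < N) :
    cB C N (N - 1 - i) = N - cA C i := by
  have hCN : ∀ c ∈ C, c ≤ N := fun c hc => by have := hC c hc; omega
  have hale := cA_le C i
  apply cB_eq hCN
  · omega
  · omega
  · rcases cA_mem C i with h | h
    · left; omega
    · right
      have := hC _ h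
      exact hsym _ h
  · intro c hc hgt
    by_contra hcon
    have h1 := hC c hc
    have h2 : N - c ∈ C := hsym c hc
    have h3 : N - c ≤ i := by omega
    have h4 := le_cA h2 h3
    omega

lemma fval_reflect {C : Finset ℕ} {N i : ℕ} (hC : ∀ c ∈ C, 1 ≤ c ∧ c ≤ N - 1)
    (hsym : ∀ c ∈ C, N - c ∈ C) (hi : i < N) :
    fval C N i + fval C N (N - 1 - i) = N - 1 := by
  have hCN : ∀ c ∈ C, c ≤ N := fun c hc => by have := hC c hc; omega
  unfold fval
  rw [cA_reflect hC hsym hi, cB_reflect hC hsym hi]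
  have h1 := cA_le C i
  have h2 := lt_cB C (N := N) hi
  have h3 := cB_le_N hCN i
  omega

/-- 0-indexed value (+1) of the permutation. -/
def w {N : ℕ} (σ : Equiv.Perm (Fin N)) (m : ℕ) : ℕ := pval σ (m + 1)

lemma w_eq {N : ℕ} (σ : Equiv.Perm (Fin N)) {m : ℕ} (h : m < N) :
    w σ m = (σ ⟨m, h⟩ : ℕ) + 1 := by
  simp only [w, pval, Nat.add_sub_cancel]
  rw [dif_pos h]

lemma w_coe {N : ℕ} (σ : Equiv.Perm (Fin N)) (j : Fin N) :
    w σ (j : ℕ) = (σ j : ℕ) + 1 := w_eq σ j.isLt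

/-- Descent (cut) set of a permutation, 1-indexed positions. -/
def Cdes {N : ℕ} (σ : Equiv.Perm (Fin N)) : Finset ℕ :=
  (Finset.Icc 1 (N - 1)).filter (fun c => pval σ (c + 1) < pval σ c)

lemma Cdes_bounds {N : ℕ} (σ : Equiv.Perm (Fin N)) : ∀ c ∈ Cdes σ, 1 ≤ c ∧ c ≤ N - 1 :=
  fun _ hc => Finset.mem_Icc.1 (Finset.mem_filter.1 hc).1

lemma mem_Cdes_w {N : ℕ} (σ : Equiv.Perm (Fin N)) {c : ℕ} :
    c ∈ Cdes σ ↔ 1 ≤ c ∧ c ≤ N - 1 ∧ w σ c < w σ (c - 1) := by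
  simp only [Cdes, Finset.mem_filter, Finset.mem_Icc, and_assoc]
  by_cases h : 1 ≤ c
  · have hce : c - 1 + 1 = c := by omega
    unfold w
    rw [hce]
  · constructor
    · rintro ⟨h1, -⟩; exact absurd h1 h
    · rintro ⟨h1, -⟩; exact absurd h1 h

lemma des_eq_card {N : ℕ} (σ : Equiv.Perm (Fin N)) : des σ = (Cdes σ).card := by
  have he := Nat.card_congr (Equiv.subtypeEquivRight
      (p := fun i => 1 ≤ i ∧ i + 1 ≤ N ∧ pval σ (i + 1) < pval σ i)
      (q := fun i => i ∈ Cdes σ) (fun c => by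
    simp only [Cdes, Finset.mem_filter, Finset.mem_Icc]
    constructor
    · rintro ⟨a, b, c'⟩; exact ⟨⟨a, by omega⟩, c'⟩
    · rintro ⟨⟨a, b⟩, c'⟩; exact ⟨a, by omega, c'⟩))
  unfold des
  rw [he, Nat.card_eq_finsetCard]

lemma card_filter_fin (N : ℕ) (P : ℕ → Prop) [DecidablePred P] :
    ((Finset.univ : Finset (Fin N)).filter (fun j : Fin N => P (j : ℕ))).card
      = ((Finset.range N).filter P).card := by
  apply Finset.card_nbij (i := Fin.val)
  · intro a ha
    simp only [Finset.mem_coe, Finset.mem_filter, Finset.mem_univ, true_and] at ha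
    simp only [Finset.mem_coe, Finset.mem_filter, Finset.mem_range]
    exact ⟨a.isLt, ha⟩
  · intro a _ b _ h
    exact Fin.val_injective h
  · intro x hx
    simp only [Finset.coe_filter, Finset.mem_range, Set.mem_setOf_eq] at hx
    exact ⟨⟨x, hx.1⟩, by simp [hx.2], rfl⟩

lemma perm_val_card {N : ℕ} (σ : Equiv.Perm (Fin N)) (x : Fin N) :
    (σ x : ℕ) = ((Finset.univ : Finset (Fin N)).filter (fun j => σ j < σ x)).card := by
  have h1 : ((Finset.univ : Finset (Fin N)).filter (fun j => σ j < σ x)).card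
      = ((Finset.univ : Finset (Fin N)).filter (fun v => v < σ x)).card := by
    apply Finset.card_nbij (i := fun j => σ j)
    · intro a ha
      simp only [Finset.mem_coe, Finset.mem_filter, Finset.mem_univ, true_and] at ha ⊢
      exact ha
    · intro a _ b _ h
      exact σ.injective h
    · intro v hv
      simp only [Finset.coe_filter, Finset.mem_univ, true_and, Set.mem_setOf_eq] at hv
      exact ⟨σ.symm v, by simp [hv], by simp⟩
  rw [h1]
  have h2 : ((Finset.univ : Finset (Fin N)).filter (fun v => v < σ x))
      = ((Finset.univ : Finset (Fin N)).filter (fun v : Fin N => (v : ℕ) < ((σ x : ℕ)))) :=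
    Finset.filter_congr (fun j _ => by rw [Fin.lt_def])
  rw [h2, card_filter_fin N (fun v => v < (σ x : ℕ))]
  have h3 : (Finset.range N).filter (fun v => v < (σ x : ℕ)) = Finset.range ((σ x : ℕ)) := by
    have := (σ x).isLt
    ext v
    simp only [Finset.mem_filter, Finset.mem_range]
    omega
  rw [h3, Finset.card_range]

lemma w_refl {N : ℕ} (σ : Equiv.Perm (Fin N)) (hc : IsCentro σ) :
    ∀ x, x < N → w σ x + w σ (N - 1 - x) = N + 1 := by
  intro x hx
  have h := hc (x + 1) (by omega) (by omega)
  have he : N + 1 - (x + 1) = (N - 1 - x) + 1 := by omega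
  rw [he] at h
  exact h

lemma Cdes_symm {N : ℕ} (σ : Equiv.Perm (Fin N)) (hc : IsCentro σ) {c : ℕ}
    (h1 : 1 ≤ c) (h2 : c ≤ N - 1) : (N - c) ∈ Cdes σ ↔ c ∈ Cdes σ := by
  rw [mem_Cdes_w, mem_Cdes_w]
  have e1 := w_refl σ hc (c - 1) (by omega)
  have e2 := w_refl σ hc c (by omega)
  rw [show N - c = N - 1 - (c - 1) from by omega]
  rw [show N - 1 - (c - 1) - 1 = N - 1 - c from by omega]
  omega

lemma value_formula {N : ℕ} (σ : Equiv.Perm (Fin N)) (hcen : IsCentro σ) (hav : Avoids132 σ) :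
    ∀ x, x < N → w σ x = fval (Cdes σ) N x + 1 := by
  have hCb := Cdes_bounds σ
  have hCN : ∀ c ∈ Cdes σ, c ≤ N := fun c hc' => by have := hCb c hc'; omega
  have hwinj : ∀ a b, a < N → b < N → w σ a = w σ b → a = b := by
    intro a b ha' hb' h
    rw [w_eq σ ha', w_eq σ hb'] at h
    have h2 : σ ⟨a, ha'⟩ = σ ⟨b, hb'⟩ := Fin.val_injective (by omega)
    simpa using congrArg Fin.val (σ.injective h2)
  have hA132w : ∀ p q r, p < q → q < r → r < N → ¬(w σ p < w σ r ∧ w σ r < w σ q) := by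
    intro p q r h1 h2 h3 h4
    exact hav ⟨p + 1, q + 1, r + 1, by omega, by omega, by omega, by omega, h4.1, h4.2⟩
  have hrefl := w_refl σ hcen
  have hA213w : ∀ p q r, p < q → q < r → r < N → ¬(w σ q < w σ p ∧ w σ p < w σ r) := by
    intro p q r h1 h2 h3 h4
    apply hA132w (N - 1 - r) (N - 1 - q) (N - 1 - p) (by omega) (by omega) (by omega)
    have e1 := hrefl p (by omega)
    have e2 := hrefl q (by omega)
    have e3 := hrefl r (by omega)
    omega
  have hmono : ∀ p q, p < q → q < N → (∀ c, p < c → c ≤ q → c ∉ Cdes σ) → w σ p < w σ q := by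
    intro p q hpq
    induction q, hpq using Nat.le_induction with
    | base =>
      intro hq hno
      show w σ p < w σ (p + 1)
      have h1 := hno (p + 1) (by omega) le_rfl
      rw [mem_Cdes_w] at h1
      simp only [Nat.add_sub_cancel] at h1
      have hnd : ¬ w σ (p + 1) < w σ p := fun hlt => h1 ⟨by omega, by omega, hlt⟩
      have hne : w σ p ≠ w σ (p + 1) := fun h => by
        have := hwinj p (p + 1) (by omega) hq h; omega
      omega
    | succ q hq ih =>
      intro hq1 hno
      show w σ p < w σ (q + 1)
      have h1 := ih (by omega) (fun c hc1 hc2 => hno c hc1 (by omega))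
      have h2 := hno (q + 1) (by omega) le_rfl
      rw [mem_Cdes_w] at h2
      simp only [Nat.add_sub_cancel] at h2
      have hnd : ¬ w σ (q + 1) < w σ q := fun hlt => h2 ⟨by omega, by omega, hlt⟩
      have hne : w σ q ≠ w σ (q + 1) := fun h => by
        have := hwinj q (q + 1) (by omega) hq1 h; omega
      omega
  have hdesc : ∀ c p q, c ∈ Cdes σ → p < c → c ≤ q → q < N → w σ q < w σ p := by
    intro c p q hc hpc hcq hqN
    obtain ⟨hc1, hcN1, hcd⟩ := (mem_Cdes_w σ).1 hc
    have hq1 : w σ q < w σ (c - 1) := by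
      rcases Nat.eq_or_lt_of_le hcq with h | h
      · rw [← h]; exact hcd
      · by_contra hcon
        have hne : w σ (c - 1) ≠ w σ q := fun he => by
          have := hwinj (c - 1) q (by omega) hqN he; omega
        exact hA213w (c - 1) c q (by omega) h hqN ⟨hcd, by omega⟩
    rcases Nat.eq_or_lt_of_le (show p + 1 ≤ c from hpc) with h | h
    · rw [show c - 1 = p from by omega] at hq1; exact hq1
    · by_contra hcon
      have hne : w σ p ≠ w σ q := fun he => by
        have := hwinj p q (by omega) hqN he; omega
      exact hA132w p (c - 1) q (by omega) (by omega) hqN ⟨by omega, hq1⟩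
  intro x hx
  classical
  have s1 : (σ ⟨x, hx⟩ : ℕ)
      = ((Finset.univ : Finset (Fin N)).filter (fun j : Fin N => w σ (j : ℕ) < w σ x)).card := by
    rw [perm_val_card σ ⟨x, hx⟩]
    congr 1
    apply Finset.filter_congr
    intro j _
    rw [w_coe σ j, w_eq σ hx, Fin.lt_def]
    omega
  have s2 : ((Finset.univ : Finset (Fin N)).filter (fun j : Fin N => w σ (j : ℕ) < w σ x))
      = (Finset.univ : Finset (Fin N)).filter
          (fun j : Fin N => (cA (Cdes σ) x ≤ (j : ℕ) ∧ (j : ℕ) < x) ∨ cB (Cdes σ) N x ≤ (j : ℕ)) := by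
    apply Finset.filter_congr
    intro j _
    constructor
    · intro hj
      rcases Nat.lt_or_ge (j : ℕ) (cA (Cdes σ) x) with h1 | h1
      · exfalso
        have hmem : cA (Cdes σ) x ∈ Cdes σ := by
          rcases cA_mem (Cdes σ) x with h | h
          · omega
          · exact h
        have := hdesc (cA (Cdes σ) x) (j : ℕ) x hmem h1 (cA_le (Cdes σ) x) hx
        omega
      · rcases Nat.lt_or_ge (j : ℕ) x with h2 | h2
        · exact Or.inl ⟨h1, h2⟩
        · right
          by_contra h3
          rcases Nat.eq_or_lt_of_le h2 with h4 | h4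
          · rw [← h4] at hj; omega
          · have := hmono x (j : ℕ) h4 j.isLt
              (fun c hc1 hc2 hmem => absurd (cB_le (N := N) hmem hc1) (by omega))
            omega
    · intro hj
      rcases hj with ⟨h1, h2⟩ | h1
      · exact hmono (j : ℕ) x h2 hx
          (fun c hc1 hc2 hmem => by have := le_cA hmem hc2; omega)
      · have hmem : cB (Cdes σ) N x ∈ Cdes σ := by
          rcases cB_mem (Cdes σ) N x with h | h
          · have := j.isLt; omega
          · exact h
        exact hdesc (cB (Cdes σ) N x) x (j : ℕ) hmem (lt_cB (Cdes σ) hx) h1 j.isLt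
  have hdisj : Disjoint
      ((Finset.univ : Finset (Fin N)).filter (fun j : Fin N => cA (Cdes σ) x ≤ (j : ℕ) ∧ (j : ℕ) < x))
      ((Finset.univ : Finset (Fin N)).filter (fun j : Fin N => cB (Cdes σ) N x ≤ (j : ℕ))) := by
    rw [Finset.disjoint_left]
    intro a ha1 ha2
    simp only [Finset.mem_filter, Finset.mem_univ, true_and] at ha1 ha2
    have := lt_cB (Cdes σ) (N := N) hx
    omega
  have c1 : ((Finset.univ : Finset (Fin N)).filter
      (fun j : Fin N => cA (Cdes σ) x ≤ (j : ℕ) ∧ (j : ℕ) < x)).card = x - cA (Cdes σ) x := by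
    rw [card_filter_fin N (fun m => cA (Cdes σ) x ≤ m ∧ m < x)]
    rw [show (Finset.range N).filter (fun m => cA (Cdes σ) x ≤ m ∧ m < x)
        = Finset.Ico (cA (Cdes σ) x) x from by
      ext m; simp only [Finset.mem_filter, Finset.mem_range, Finset.mem_Ico]; omega]
    rw [Nat.card_Ico]
  have c2 : ((Finset.univ : Finset (Fin N)).filter
      (fun j : Fin N => cB (Cdes σ) N x ≤ (j : ℕ))).card = N - cB (Cdes σ) N x := by
    rw [card_filter_fin N (fun m => cB (Cdes σ) N x ≤ m)]
    rw [show (Finset.range N).filter (fun m => cB (Cdes σ) N x ≤ m)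
        = Finset.Ico (cB (Cdes σ) N x) N from by
      ext m; simp only [Finset.mem_filter, Finset.mem_range, Finset.mem_Ico]; omega]
    rw [Nat.card_Ico]
  rw [w_eq σ hx, s1, s2, Finset.filter_or, Finset.card_union_of_disjoint hdisj, c1, c2]
  have e2 := cA_le (Cdes σ) x
  have e3 := lt_cB (Cdes σ) (N := N) hx
  have e4 := cB_le_N hCN x
  unfold fval
  omega

lemma pval_eq_w {N : ℕ} (σ : Equiv.Perm (Fin N)) {i : ℕ} (h : 1 ≤ i) :
    pval σ i = w σ (i - 1) := by
  unfold w
  rw [show i - 1 + 1 = i from by omega]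

/-- cut set associated to a subset of `Fin n` -/
def cuts (n : ℕ) (S : Finset (Fin n)) : Finset ℕ :=
  S.image (fun s : Fin n => (s : ℕ) + 1) ∪ S.image (fun s : Fin n => 2 * n - (s : ℕ))

lemma cuts_bounds (n : ℕ) (S : Finset (Fin n)) : ∀ c ∈ cuts n S, 1 ≤ c ∧ c ≤ 2 * n := by
  intro c hc
  rcases Finset.mem_union.1 hc with h | h <;> obtain ⟨s, -, rfl⟩ := Finset.mem_image.1 h <;>
    have := s.isLt <;> omega

lemma cuts_le (n : ℕ) (S : Finset (Fin n)) : ∀ c ∈ cuts n S, c ≤ 2 * n + 1 :=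
  fun c hc => by have := cuts_bounds n S c hc; omega

lemma cuts_symm (n : ℕ) (S : Finset (Fin n)) : ∀ c ∈ cuts n S, 2 * n + 1 - c ∈ cuts n S := by
  intro c hc
  rcases Finset.mem_union.1 hc with h | h <;> obtain ⟨s, hs, rfl⟩ := Finset.mem_image.1 h
  · exact Finset.mem_union_right _
      (Finset.mem_image.2 ⟨s, hs, by have := s.isLt; omega⟩)
  · exact Finset.mem_union_left _
      (Finset.mem_image.2 ⟨s, hs, by have := s.isLt; omega⟩)

lemma cuts_card (n : ℕ) (S : Finset (Fin n)) : (cuts n S).card = 2 * S.card := by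
  have d : Disjoint (S.image (fun s : Fin n => (s : ℕ) + 1))
      (S.image (fun s : Fin n => 2 * n - (s : ℕ))) := by
    rw [Finset.disjoint_left]
    intro a h1 h2
    obtain ⟨s, -, rfl⟩ := Finset.mem_image.1 h1
    obtain ⟨t, -, he⟩ := Finset.mem_image.1 h2
    have := s.isLt; have := t.isLt; omega
  rw [cuts, Finset.card_union_of_disjoint d, Finset.card_image_of_injOn,
    Finset.card_image_of_injOn]
  · omega
  · intro a _ b _ h
    beta_reduce at h
    have := a.isLt; have := b.isLt
    exact Fin.ext (by omega)
  · intro a _ b _ h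
    beta_reduce at h
    have := a.isLt; have := b.isLt
    exact Fin.ext (by omega)

lemma mem_cuts_plus (n : ℕ) (S : Finset (Fin n)) (s : Fin n) :
    (s : ℕ) + 1 ∈ cuts n S ↔ s ∈ S := by
  constructor
  · intro h
    rcases Finset.mem_union.1 h with h | h <;> obtain ⟨t, ht, he⟩ := Finset.mem_image.1 h
    · rwa [show t = s from Fin.ext (by omega)] at ht
    · have := t.isLt; have := s.isLt; omega
  · intro h
    exact Finset.mem_union_left _ (Finset.mem_image.2 ⟨s, h, rfl⟩)

/-- the anti-layered permutation associated to a subset -/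
noncomputable def permC (n : ℕ) (S : Finset (Fin n)) : Equiv.Perm (Fin (2 * n + 1)) :=
  Equiv.ofBijective
    (fun i => ⟨fval (cuts n S) (2 * n + 1) (i : ℕ), fval_lt (cuts_le n S) i.isLt⟩)
    (Finite.injective_iff_bijective.1 (fun a b h => Fin.ext
      (fval_inj (cuts_le n S) a.isLt b.isLt (congrArg Fin.val h))))

lemma w_permC {n : ℕ} (S : Finset (Fin n)) {m : ℕ} (hm : m < 2 * n + 1) :
    w (permC n S) m = fval (cuts n S) (2 * n + 1) m + 1 := by
  rw [w_eq _ hm]; rfl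

lemma isCentro_permC (n : ℕ) (S : Finset (Fin n)) : IsCentro (permC n S) := by
  intro i hi1 hi2
  rw [pval_eq_w _ hi1, pval_eq_w _ (show 1 ≤ 2 * n + 1 + 1 - i by omega)]
  rw [w_permC S (show i - 1 < 2 * n + 1 by omega),
    w_permC S (show 2 * n + 1 + 1 - i - 1 < 2 * n + 1 by omega)]
  rw [show 2 * n + 1 + 1 - i - 1 = 2 * n + 1 - 1 - (i - 1) from by omega]
  have := fval_reflect (N := 2 * n + 1) (C := cuts n S)
    (fun c hc => by have := cuts_bounds n S c hc; omega)
    (cuts_symm n S) (show i - 1 < 2 * n + 1 by omega)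
  omega

lemma avoids132_permC (n : ℕ) (S : Finset (Fin n)) : Avoids132 (permC n S) := by
  rintro ⟨i, j, k, h1, h2, h3, h4, h5, h6⟩
  rw [pval_eq_w _ (show 1 ≤ i by omega), pval_eq_w _ (show 1 ≤ k by omega),
    w_permC S (show i - 1 < 2 * n + 1 by omega),
    w_permC S (show k - 1 < 2 * n + 1 by omega)] at h5
  rw [pval_eq_w _ (show 1 ≤ k by omega), pval_eq_w _ (show 1 ≤ j by omega),
    w_permC S (show k - 1 < 2 * n + 1 by omega),
    w_permC S (show j - 1 < 2 * n + 1 by omega)] at h6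
  rcases fval_tri (N := 2 * n + 1) (cuts_le n S) (show j - 1 < k - 1 by omega)
      (show k - 1 < 2 * n + 1 by omega) with ⟨hA, hB, hf⟩ | ⟨hcb, hf⟩
  · omega
  · rcases fval_tri (N := 2 * n + 1) (cuts_le n S) (show i - 1 < k - 1 by omega)
        (show k - 1 < 2 * n + 1 by omega) with ⟨hA2, hB2, hf2⟩ | ⟨hcb2, hf2⟩
    · have hk1 := lt_cB (cuts n S) (N := 2 * n + 1) (show k - 1 < 2 * n + 1 by omega)
      have hb1 : cA (cuts n S) (i - 1) ≤ j - 1 :=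
        le_trans (cA_le (cuts n S) (i - 1)) (by omega)
      have hb2 : j - 1 < cB (cuts n S) (2 * n + 1) (i - 1) := by omega
      have := cB_block (cuts_le n S) hb1 hb2
      omega
    · omega

lemma Cdes_permC (n : ℕ) (S : Finset (Fin n)) : Cdes (permC n S) = cuts n S := by
  ext c
  rw [mem_Cdes_w]
  constructor
  · rintro ⟨h1, h2, h3⟩
    rw [w_permC S (show c < 2 * n + 1 by omega),
      w_permC S (show c - 1 < 2 * n + 1 by omega)] at h3
    by_contra hnc
    have hB : c < cB (cuts n S) (2 * n + 1) (c - 1) := by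
      have h4 := lt_cB (cuts n S) (N := 2 * n + 1) (show c - 1 < 2 * n + 1 by omega)
      rcases cB_mem (cuts n S) (2 * n + 1) (c - 1) with h5 | h5
      · omega
      · have : cB (cuts n S) (2 * n + 1) (c - 1) ≠ c := fun he => hnc (he ▸ h5)
        omega
    have := fval_block (cuts_le n S) (show c - 1 < c by omega) hB
    omega
  · intro hc
    have hb := cuts_bounds n S c hc
    refine ⟨hb.1, by omega, ?_⟩
    rw [w_permC S (show c < 2 * n + 1 by omega),
      w_permC S (show c - 1 < 2 * n + 1 by omega)]
    have := fval_cross (cuts_le n S) (cB_le (N := 2 * n + 1) hc (show c - 1 < c by omega))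
      (show c < 2 * n + 1 by omega)
    omega

lemma des_permC (n : ℕ) (S : Finset (Fin n)) : des (permC n S) = 2 * S.card := by
  rw [des_eq_card, Cdes_permC, cuts_card]

lemma exists_S (n : ℕ) (σ : Equiv.Perm (Fin (2 * n + 1))) (hc : IsCentro σ) :
    ∃ S : Finset (Fin n), cuts n S = Cdes σ := by
  classical
  refine ⟨Finset.univ.filter (fun s : Fin n => (s : ℕ) + 1 ∈ Cdes σ), ?_⟩
  ext c
  constructor
  · intro hcc
    rcases Finset.mem_union.1 hcc with h | h <;> obtain ⟨s, hs, rfl⟩ := Finset.mem_image.1 h <;>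
      rw [Finset.mem_filter] at hs
    · exact hs.2
    · have hsl := s.isLt
      have h2 := (Cdes_symm σ hc (c := (s : ℕ) + 1) (by omega) (by omega)).2 hs.2
      rwa [show 2 * n + 1 - ((s : ℕ) + 1) = 2 * n - (s : ℕ) from by omega] at h2
  · intro hcd
    have hb := Cdes_bounds σ c hcd
    by_cases hcn : c ≤ n
    · apply Finset.mem_union_left
      apply Finset.mem_image.2
      refine ⟨⟨c - 1, by omega⟩, ?_, show c - 1 + 1 = c by omega⟩
      rw [Finset.mem_filter]
      refine ⟨Finset.mem_univ _, ?_⟩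
      show (c - 1) + 1 ∈ Cdes σ
      rw [show c - 1 + 1 = c from by omega]
      exact hcd
    · apply Finset.mem_union_right
      apply Finset.mem_image.2
      have hb2 : c ≤ 2 * n := by omega
      refine ⟨⟨2 * n - c, by omega⟩, ?_, show 2 * n - (2 * n - c) = c by omega⟩
      rw [Finset.mem_filter]
      refine ⟨Finset.mem_univ _, ?_⟩
      show (2 * n - c) + 1 ∈ Cdes σ
      rw [show 2 * n - c + 1 = 2 * n + 1 - c from by omega]
      exact (Cdes_symm σ hc hb.1 hb.2).2 hcd

lemma perm_eq (n : ℕ) (σ : Equiv.Perm (Fin (2 * n + 1))) (hc : IsCentro σ) (ha : Avoids132 σ)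
    (S : Finset (Fin n)) (hS : cuts n S = Cdes σ) : permC n S = σ := by
  apply Equiv.ext
  intro x
  apply Fin.val_injective
  have h1 := value_formula σ hc ha (x : ℕ) x.isLt
  have h2 := w_coe σ x
  show fval (cuts n S) (2 * n + 1) (x : ℕ) = (σ x : ℕ)
  rw [hS]
  omega

end CS132

/-- For every `n ≥ 1` and `k ≥ 0`, the number of centrosymmetric
132-avoiding permutations of `{1,…,2n+1}` with exactly `k` descents is
`C(n, k/2)` if `k` is even and `0` if `k` is odd. -/
theorem stmt1 (n k : ℕ) (hn : 1 ≤ n) :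
    Nat.card {σ : Equiv.Perm (Fin (2 * n + 1)) // IsCentro σ ∧ Avoids132 σ ∧ des σ = k}
      = if k % 2 = 0 then Nat.choose n (k / 2) else 0 := by
  classical
  by_cases hk : k % 2 = 0
  · rw [if_pos hk]
    have hbij : Function.Bijective (fun S : {S : Finset (Fin n) // S.card = k / 2} =>
        (⟨CS132.permC n S.1, CS132.isCentro_permC n S.1, CS132.avoids132_permC n S.1, by
          rw [CS132.des_permC n S.1, S.2]; omega⟩ :
          {σ : Equiv.Perm (Fin (2 * n + 1)) // IsCentro σ ∧ Avoids132 σ ∧ des σ = k})) := by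
      constructor
      · rintro ⟨S, hS⟩ ⟨T, hT⟩ h
        have h2 : CS132.permC n S = CS132.permC n T := congrArg Subtype.val h
        have h3 : CS132.cuts n S = CS132.cuts n T := by
          rw [← CS132.Cdes_permC n S, ← CS132.Cdes_permC n T, h2]
        apply Subtype.ext
        ext s
        rw [← CS132.mem_cuts_plus n S s, ← CS132.mem_cuts_plus n T s, h3]
      · rintro ⟨σ, hcen, hav, hdes⟩
        obtain ⟨S, hS⟩ := CS132.exists_S n σ hcen
        have hdc := CS132.des_eq_card σ
        rw [← hS, CS132.cuts_card] at hdc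
        have hcard : S.card = k / 2 := by omega
        exact ⟨⟨S, hcard⟩, Subtype.ext (CS132.perm_eq n σ hcen hav S hS)⟩
    rw [← Nat.card_eq_of_bijective _ hbij, Nat.card_eq_fintype_card, Fintype.card_finset_len,
      Fintype.card_fin]
  · rw [if_neg hk]
    rw [Nat.card_eq_zero]
    left
    constructor
    rintro ⟨σ, hcen, hav, hdes⟩
    obtain ⟨S, hS⟩ := CS132.exists_S n σ hcen
    have hdc := CS132.des_eq_card σ
    rw [← hS, CS132.cuts_card] at hdc
    omega
end

section
/- Let n ≥ 1 and let σ ∈ C_{2n}. Let l ≥ 0 be the largest integer with l+1 ≤ n such that σ(j) > σ(1) for all 2 ≤ j ≤ l+1. Then σ avoids 123 if and only if all of the following hold: (i) σ(1) ≥ n; (ii) σ(1+j) = 2n+1−j for every 1 ≤ j ≤ l, and 2n−l+1 > σ(1); (iii) if l+2 ≤ n then σ(l+2) < σ(1); (iv) the permutation of S_{2n−2l−2} that is order-isomorphic to the subsequence σ(l+2), σ(l+3), …, σ(2n−l−1) (i.e., σ with the first l+1 and the last l+1 entries deleted) is centrosymmetric and avoids 123. -/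
lemma pval_bounds {N : ℕ} (σ : Equiv.Perm (Fin N)) {i : ℕ} (h1 : 1 ≤ i) (h2 : i ≤ N) :
    1 ≤ pval σ i ∧ pval σ i ≤ N := by
  have h : i - 1 < N := by omega
  simp only [pval, dif_pos h]
  have := (σ ⟨i - 1, h⟩).isLt
  omega

lemma pval_inj {N : ℕ} (σ : Equiv.Perm (Fin N)) {i j : ℕ} (hi1 : 1 ≤ i) (hi2 : i ≤ N)
    (hj1 : 1 ≤ j) (hj2 : j ≤ N) (h : pval σ i = pval σ j) : i = j := by
  have hi : i - 1 < N := by omega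
  have hj : j - 1 < N := by omega
  simp only [pval, dif_pos hi, dif_pos hj] at h
  have h2 : σ ⟨i - 1, hi⟩ = σ ⟨j - 1, hj⟩ := by
    apply Fin.ext; omega
  have : i - 1 = j - 1 := Fin.mk.inj_iff.mp (σ.injective h2)
  omega

lemma pval_surj {N : ℕ} (σ : Equiv.Perm (Fin N)) {v : ℕ} (h1 : 1 ≤ v) (h2 : v ≤ N) :
    ∃ p, 1 ≤ p ∧ p ≤ N ∧ pval σ p = v := by
  have hv : v - 1 < N := by omega
  refine ⟨(σ.symm ⟨v - 1, hv⟩ : ℕ) + 1, by omega, by have := (σ.symm ⟨v-1,hv⟩).isLt; omega, ?_⟩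
  have h : (σ.symm ⟨v - 1, hv⟩ : ℕ) + 1 - 1 < N := by simpa using (σ.symm ⟨v-1,hv⟩).isLt
  simp only [pval, dif_pos h]
  have : (⟨(σ.symm ⟨v - 1, hv⟩ : ℕ) + 1 - 1, h⟩ : Fin N) = σ.symm ⟨v - 1, hv⟩ := by
    apply Fin.ext; simp
  rw [this, Equiv.apply_symm_apply]
  simp only [Fin.val_mk]
  omega

open Finset in
lemma exists_rank_perm {M : ℕ} (g : Fin M → ℕ) (hginj : Function.Injective g) :
    ∃ τ : Equiv.Perm (Fin M),
      (∀ a, (τ a : ℕ) = (univ.filter fun b => g b < g a).card) ∧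
      (∀ a b, τ a < τ b ↔ g a < g b) := by
  have hM : ∀ (_ : Fin M), 0 < M := fun a => a.pos
  have hcard : ∀ a : Fin M, (univ.filter fun b => g b < g a).card < M := by
    intro a
    have hsub : (univ.filter fun b => g b < g a) ⊆ univ.erase a := by
      intro b hb
      simp only [mem_filter, mem_univ, true_and] at hb
      refine mem_erase.mpr ⟨?_, mem_univ b⟩
      rintro rfl; exact lt_irrefl _ hb
    have h1 := card_le_card hsub
    rw [card_erase_of_mem (mem_univ a), card_univ, Fintype.card_fin] at h1
    have := hM a; omega
  have hmono : ∀ a b : Fin M, g a < g b →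
      (univ.filter fun c => g c < g a).card < (univ.filter fun c => g c < g b).card := by
    intro a b hab
    apply card_lt_card
    have hsub : (univ.filter fun c => g c < g a) ⊆ (univ.filter fun c => g c < g b) := by
      intro c hc
      simp only [mem_filter, mem_univ, true_and] at hc ⊢
      omega
    rw [ssubset_iff_of_subset hsub]
    exact ⟨a, by simp [hab], by simp⟩
  set τ0 : Fin M → Fin M := fun a => ⟨_, hcard a⟩ with hτ0
  have hinj : Function.Injective τ0 := by
    intro a b hab
    rcases lt_trichotomy (g a) (g b) with h | h | h
    · have := hmono a b h
      simp only [hτ0, Fin.mk.injEq] at hab; omega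
    · exact hginj h
    · have := hmono b a h
      simp only [hτ0, Fin.mk.injEq] at hab; omega
  refine ⟨Equiv.ofBijective τ0 (Finite.injective_iff_bijective.mp hinj), fun a => rfl, ?_⟩
  intro a b
  constructor
  · intro h
    rcases lt_trichotomy (g a) (g b) with h' | h' | h'
    · exact h'
    · exact absurd (hginj h') (by rintro rfl; exact lt_irrefl _ h)
    · exact absurd (hmono b a h') (by have : τ0 b < τ0 a → False := fun hh => absurd (lt_trans h hh) (lt_irrefl _); intro hh; exact this hh)
  · intro h
    exact hmono a b h

open Finset in
lemma rank_card_mirror {M T : ℕ} (g : Fin M → ℕ) (hginj : Function.Injective g)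
    (e : Fin M → Fin M) (he : ∀ a, e (e a) = a) (hge : ∀ a, g (e a) + g a = T)
    {a a' : Fin M} (haa' : g a + g a' = T) :
    (univ.filter fun b => g b < g a').card = M - 1 - (univ.filter fun b => g b < g a).card ∧
    (univ.filter fun b => g b < g a).card ≤ M - 1 := by
  have hle : (univ.filter fun b => g b < g a).card ≤ M - 1 := by
    have hsub : (univ.filter fun b => g b < g a) ⊆ univ.erase a := by
      intro b hb
      simp only [mem_filter, mem_univ, true_and] at hb
      refine mem_erase.mpr ⟨?_, mem_univ b⟩
      rintro rfl; exact lt_irrefl _ hb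
    have h1 := card_le_card hsub
    rwa [card_erase_of_mem (mem_univ a), card_univ, Fintype.card_fin] at h1
  refine ⟨?_, hle⟩
  have step1 : (univ.filter fun b => g b < g a') = (univ.filter fun b => g a < g (e b)) := by
    apply filter_congr
    intro b _
    have h1 := hge b
    omega
  have step2 : (univ.filter fun b => g a < g (e b)).card
      = (univ.filter fun c => g a < g c).card := by
    apply card_bij' (fun b _ => e b) (fun c _ => e c)
    · intro b hb
      simp only [mem_filter, mem_univ, true_and] at hb ⊢
      exact hb
    · intro c hc
      simp only [mem_filter, mem_univ, true_and] at hc ⊢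
      rwa [he c]
    · intro b _; exact he b
    · intro c _; exact he c
  have step3 : (univ.filter fun c => g c < g a).card + (univ.filter fun c => g a < g c).card
      = M - 1 := by
    have hpart := card_filter_add_card_filter_not (s := (univ : Finset (Fin M)))
      (p := fun c => g c < g a)
    have hins : (univ.filter fun c => ¬ g c < g a) = insert a (univ.filter fun c => g a < g c) := by
      ext c
      simp only [mem_filter, mem_univ, true_and, mem_insert, not_lt]
      constructor
      · intro h
        rcases eq_or_lt_of_le h with h' | h'
        · exact Or.inl (hginj h'.symm)
        · exact Or.inr h'
      · rintro (rfl | h) <;> omega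
    have hnotmem : a ∉ (univ.filter fun c => g a < g c) := by simp
    rw [hins, card_insert_of_notMem hnotmem] at hpart
    rw [card_univ, Fintype.card_fin] at hpart
    have := a.pos
    omega
  rw [step1, step2]
  omega


/-- characterization of centrosymmetric 123-avoiding permutations of
`{1,…,2n}` in terms of the initial left-to-right minimum `σ(1)` and the maximal run
`σ(2),…,σ(l+1)` of values above `σ(1)`. -/
theorem stmt3 (n l : ℕ) (hn : 1 ≤ n) (σ : Equiv.Perm (Fin (2 * n)))
    (hσ : IsCentro σ)
    (hl1 : l + 1 ≤ n)
    (hl2 : ∀ j, 2 ≤ j → j ≤ l + 1 → pval σ 1 < pval σ j)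
    (hl3 : ∀ l', l' + 1 ≤ n → (∀ j, 2 ≤ j → j ≤ l' + 1 → pval σ 1 < pval σ j) → l' ≤ l) :
    Avoids123 σ ↔
      (n ≤ pval σ 1) ∧
      ((∀ j, 1 ≤ j → j ≤ l → pval σ (1 + j) = 2 * n + 1 - j) ∧ pval σ 1 < 2 * n - l + 1) ∧
      (l + 2 ≤ n → pval σ (l + 2) < pval σ 1) ∧
      (∃ τ : Equiv.Perm (Fin (2 * n - 2 * l - 2)),
        (∀ a b : Fin (2 * n - 2 * l - 2),
          τ a < τ b ↔ pval σ (l + 2 + (a : ℕ)) < pval σ (l + 2 + (b : ℕ))) ∧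
        IsCentro τ ∧ Avoids123 τ) := by
  have hN : 1 ≤ 2 * n := by omega
  have hb1 := pval_bounds σ (le_refl 1) hN
  have hlast : pval σ 1 + pval σ (2 * n) = 2 * n + 1 := by
    have h := hσ 1 le_rfl hN
    have e : 2 * n + 1 - 1 = 2 * n := by omega
    rwa [e] at h
  -- (iii) holds unconditionally
  have hiii : l + 2 ≤ n → pval σ (l + 2) < pval σ 1 := by
    intro hln
    have h := hl3 (l + 1) (by omega)
    have h2 : ¬ (∀ j, 2 ≤ j → j ≤ l + 2 → pval σ 1 < pval σ j) := by
      intro hc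
      have := h (by intro j hj1 hj2; exact hc j hj1 (by omega))
      omega
    push_neg at h2
    obtain ⟨j, hj1, hj2, hj3⟩ := h2
    have hj : j = l + 2 := by
      by_contra hc
      have := hl2 j hj1 (by omega)
      omega
    subst hj
    rcases Nat.lt_or_ge (pval σ (l + 2)) (pval σ 1) with h | h
    · exact h
    · exfalso
      have heq : pval σ (l + 2) = pval σ 1 := by omega
      have := pval_inj σ (by omega) (by omega) (le_refl 1) hN heq
      omega
  constructor
  · intro hA
    -- (i)
    have hv1 : n ≤ pval σ 1 := by
      by_contra hc
      push_neg at hc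
      obtain ⟨p, hp1, hp2, hp3⟩ := pval_surj σ (v := pval σ 1 + 1) (by omega) (by omega)
      apply hA
      refine ⟨1, p, 2 * n, le_rfl, ?_, ?_, le_rfl, by omega, by omega⟩
      · rcases Nat.lt_or_ge 1 p with h | h
        · exact h
        · exfalso
          have : p = 1 := by omega
          subst this
          omega
      · rcases Nat.lt_or_ge p (2 * n) with h | h
        · exact h
        · exfalso
          have : p = 2 * n := by omega
          subst this
          omega
    -- (ii)a
    have hii : ∀ j, 1 ≤ j → j ≤ l → pval σ (1 + j) = 2 * n + 1 - j := by
      intro j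
      induction j using Nat.strong_induction_on with
      | _ j ih =>
        intro hj1 hjl
        have hjb := pval_bounds σ (i := 1 + j) (by omega) (by omega)
        have hl2j := hl2 (1 + j) (by omega) (by omega)
        have hupper : pval σ (1 + j) ≤ 2 * n + 1 - j := by
          by_contra hc
          push_neg at hc
          have hj'1 : 1 ≤ 2 * n + 1 - pval σ (1 + j) := by omega
          have hj'2 : 2 * n + 1 - pval σ (1 + j) < j := by omega
          have hih := ih (2 * n + 1 - pval σ (1 + j)) hj'2 hj'1 (by omega)
          have heq : pval σ (1 + (2 * n + 1 - pval σ (1 + j))) = pval σ (1 + j) := by omega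
          have := pval_inj σ (i := 1 + (2 * n + 1 - pval σ (1 + j))) (j := 1 + j)
            (by omega) (by omega) (by omega) (by omega) heq
          omega
        rcases Nat.lt_or_ge (pval σ (1 + j)) (2 * n + 1 - j) with hc | hc
        · exfalso
          obtain ⟨p, hp1, hp2, hp3⟩ := pval_surj σ (v := 2 * n + 1 - j) (by omega) (by omega)
          have hpgt : 1 + j < p := by
            rcases Nat.lt_or_ge (1 + j) p with h | h
            · exact h
            · exfalso
              rcases Nat.eq_or_lt_of_le h with h' | h'
              · subst h'; omega
              · -- p ≤ j
                rcases Nat.eq_or_lt_of_le hp1 with h'' | h''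
                · subst h''; omega
                · -- 2 ≤ p ≤ j
                  have hih := ih (p - 1) (by omega) (by omega) (by omega)
                  have hrw : 1 + (p - 1) = p := by omega
                  rw [hrw] at hih
                  omega
          exact hA ⟨1, 1 + j, p, le_rfl, by omega, hpgt, hp2, by omega, by omega⟩
        · omega
    -- (ii)b
    have hiib : pval σ 1 < 2 * n - l + 1 := by
      rcases Nat.eq_zero_or_pos l with rfl | hl
      · omega
      · have h := hii l hl le_rfl
        have h2 := hl2 (1 + l) (by omega) (by omega)
        omega
    refine ⟨hv1, ⟨hii, hiib⟩, hiii, ?_⟩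
    -- (iv): construct τ as the rank permutation of the middle block
    have hgb : ∀ a : Fin (2 * n - 2 * l - 2), 1 ≤ pval σ (l + 2 + (a : ℕ)) ∧
        pval σ (l + 2 + (a : ℕ)) ≤ 2 * n := by
      intro a; have := a.isLt; exact pval_bounds σ (by omega) (by omega)
    have hginj : Function.Injective (fun a : Fin (2 * n - 2 * l - 2) =>
        pval σ (l + 2 + (a : ℕ))) := by
      intro a b hab
      have ha := a.isLt; have hb := b.isLt
      simp only at hab
      have := pval_inj σ (i := l + 2 + (a : ℕ)) (j := l + 2 + (b : ℕ))
        (by omega) (by omega) (by omega) (by omega) hab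
      exact Fin.ext (by omega)
    obtain ⟨τ, hτval, hτord⟩ := exists_rank_perm _ hginj
    have hτord' : ∀ a b : Fin (2 * n - 2 * l - 2),
        τ a < τ b ↔ pval σ (l + 2 + (a : ℕ)) < pval σ (l + 2 + (b : ℕ)) := hτord
    refine ⟨τ, hτord', ?_, ?_⟩
    · -- IsCentro τ
      intro i hi1 hiM
      have hM1 : 1 ≤ 2 * n - 2 * l - 2 := le_trans hi1 hiM
      have ha : i - 1 < 2 * n - 2 * l - 2 := by omega
      have ha' : (2 * n - 2 * l - 2) + 1 - i - 1 < 2 * n - 2 * l - 2 := by omega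
      have hpv1 : pval τ i = (τ ⟨i - 1, ha⟩ : ℕ) + 1 := by
        simp only [pval, dif_pos ha]
      have hpv2 : pval τ ((2 * n - 2 * l - 2) + 1 - i)
          = (τ ⟨(2 * n - 2 * l - 2) + 1 - i - 1, ha'⟩ : ℕ) + 1 := by
        simp only [pval, dif_pos ha']
      have hee : ∀ b : Fin (2 * n - 2 * l - 2),
          (fun b : Fin (2 * n - 2 * l - 2) => (⟨2 * n - 2 * l - 2 - 1 - (b : ℕ),
            by have := b.isLt; omega⟩ : Fin (2 * n - 2 * l - 2)))
          ((fun b : Fin (2 * n - 2 * l - 2) => (⟨2 * n - 2 * l - 2 - 1 - (b : ℕ),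
            by have := b.isLt; omega⟩ : Fin (2 * n - 2 * l - 2))) b) = b := by
        intro b; have := b.isLt
        apply Fin.ext
        simp only [Fin.val_mk]
        omega
      have hge : ∀ b : Fin (2 * n - 2 * l - 2),
          pval σ (l + 2 + ((⟨2 * n - 2 * l - 2 - 1 - (b : ℕ),
            by have := b.isLt; omega⟩ : Fin (2 * n - 2 * l - 2)) : ℕ))
          + pval σ (l + 2 + (b : ℕ)) = 2 * n + 1 := by
        intro b
        have hb := b.isLt
        have hc := hσ (l + 2 + (b : ℕ)) (by omega) (by omega)
        have harg : 2 * n + 1 - (l + 2 + (b : ℕ)) = l + 2 + (2 * n - 2 * l - 2 - 1 - (b : ℕ)) := by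
          omega
        rw [harg] at hc
        simp only [Fin.val_mk]
        omega
      have hsum : pval σ (l + 2 + ((⟨i - 1, ha⟩ : Fin (2 * n - 2 * l - 2)) : ℕ))
          + pval σ (l + 2 + ((⟨(2 * n - 2 * l - 2) + 1 - i - 1, ha'⟩ :
            Fin (2 * n - 2 * l - 2)) : ℕ)) = 2 * n + 1 := by
        have hc := hσ (l + 1 + i) (by omega) (by omega)
        have harg : 2 * n + 1 - (l + 1 + i) = l + 2 + ((2 * n - 2 * l - 2) + 1 - i - 1) := by
          omega
        have harg2 : l + 1 + i = l + 2 + (i - 1) := by omega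
        rw [harg, harg2] at hc
        simp only [Fin.val_mk]
        exact hc
      obtain ⟨hmir, hle⟩ := rank_card_mirror (fun a : Fin (2 * n - 2 * l - 2) =>
        pval σ (l + 2 + (a : ℕ))) hginj _ hee hge hsum
      rw [hpv1, hpv2, hτval ⟨i - 1, ha⟩, hτval ⟨(2 * n - 2 * l - 2) + 1 - i - 1, ha'⟩]
      simp only [Fin.val_mk] at hmir hle ⊢
      omega
    · -- Avoids123 τ
      rintro ⟨i, j, k, hi1, hij, hjk, hkM, e1, e2⟩
      have hdi : i - 1 < 2 * n - 2 * l - 2 := by omega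
      have hdj : j - 1 < 2 * n - 2 * l - 2 := by omega
      have hdk : k - 1 < 2 * n - 2 * l - 2 := by omega
      rw [show pval τ i = (τ ⟨i - 1, hdi⟩ : ℕ) + 1 by simp only [pval, dif_pos hdi],
          show pval τ j = (τ ⟨j - 1, hdj⟩ : ℕ) + 1 by simp only [pval, dif_pos hdj]] at e1
      rw [show pval τ j = (τ ⟨j - 1, hdj⟩ : ℕ) + 1 by simp only [pval, dif_pos hdj],
          show pval τ k = (τ ⟨k - 1, hdk⟩ : ℕ) + 1 by simp only [pval, dif_pos hdk]] at e2
      have g1 : pval σ (l + 2 + (i - 1)) < pval σ (l + 2 + (j - 1)) :=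
        (hτord' ⟨i - 1, hdi⟩ ⟨j - 1, hdj⟩).mp (by exact Fin.lt_def.mpr (by omega))
      have g2 : pval σ (l + 2 + (j - 1)) < pval σ (l + 2 + (k - 1)) :=
        (hτord' ⟨j - 1, hdj⟩ ⟨k - 1, hdk⟩).mp (by exact Fin.lt_def.mpr (by omega))
      apply hA
      refine ⟨l + 1 + i, l + 1 + j, l + 1 + k, by omega, by omega, by omega, by omega, ?_, ?_⟩
      · rw [show l + 1 + i = l + 2 + (i - 1) by omega, show l + 1 + j = l + 2 + (j - 1) by omega]
        exact g1
      · rw [show l + 1 + j = l + 2 + (j - 1) by omega, show l + 1 + k = l + 2 + (k - 1) by omega]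
        exact g2

  · rintro ⟨h1, ⟨h2a, h2b⟩, h3, τ, hiso, hτc, hτa⟩
    -- Backward direction
    have hT : ∀ j, 1 ≤ j → j ≤ l → pval σ (2 * n - j) = j := by
      intro j hj1 hjl
      have hc := hσ (1 + j) (by omega) (by omega)
      have harg : 2 * n + 1 - (1 + j) = 2 * n - j := by omega
      rw [harg] at hc
      have := h2a j hj1 hjl
      omega
    have hF6 : ∀ i j k, l + 2 ≤ i → i < j → j < k → k ≤ 2 * n - l - 1 →
        pval σ i < pval σ j → pval σ j < pval σ k → False := by
      intro i j k hi hij hjk hk e1 e2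
      have hd1 : i - l - 1 - 1 < 2 * n - 2 * l - 2 := by omega
      have hd2 : j - l - 1 - 1 < 2 * n - 2 * l - 2 := by omega
      have hd3 : k - l - 1 - 1 < 2 * n - 2 * l - 2 := by omega
      apply hτa
      refine ⟨i - l - 1, j - l - 1, k - l - 1, by omega, by omega, by omega, by omega, ?_, ?_⟩
      · rw [show pval τ (i - l - 1) = (τ ⟨i - l - 1 - 1, hd1⟩ : ℕ) + 1 by
            simp only [pval, dif_pos hd1],
          show pval τ (j - l - 1) = (τ ⟨j - l - 1 - 1, hd2⟩ : ℕ) + 1 by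
            simp only [pval, dif_pos hd2]]
        have : τ ⟨i - l - 1 - 1, hd1⟩ < τ ⟨j - l - 1 - 1, hd2⟩ := by
          rw [hiso]
          simp only [Fin.val_mk]
          rw [show l + 2 + (i - l - 1 - 1) = i by omega, show l + 2 + (j - l - 1 - 1) = j by omega]
          exact e1
        omega
      · rw [show pval τ (j - l - 1) = (τ ⟨j - l - 1 - 1, hd2⟩ : ℕ) + 1 by
            simp only [pval, dif_pos hd2],
          show pval τ (k - l - 1) = (τ ⟨k - l - 1 - 1, hd3⟩ : ℕ) + 1 by
            simp only [pval, dif_pos hd3]]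
        have : τ ⟨j - l - 1 - 1, hd2⟩ < τ ⟨k - l - 1 - 1, hd3⟩ := by
          rw [hiso]
          simp only [Fin.val_mk]
          rw [show l + 2 + (j - l - 1 - 1) = j by omega, show l + 2 + (k - l - 1 - 1) = k by omega]
          exact e2
        omega
    have hZ1 : ∀ p, 1 ≤ p → p ≤ 2 * n → pval σ p ≤ l → p = 2 * n - pval σ p := by
      intro p hp1 hp2 hpl
      have hb := pval_bounds σ hp1 hp2
      have h := hT (pval σ p) (by omega) hpl
      exact pval_inj σ hp1 hp2 (by omega) (by omega) h.symm
    have hZ2 : ∀ p, l + 2 ≤ p → p ≤ 2 * n → pval σ p ≤ 2 * n - l := by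
      intro p hp1 hp2
      by_contra hc
      push_neg at hc
      have hb := pval_bounds σ (by omega) hp2
      have h := h2a (2 * n + 1 - pval σ p) (by omega) (by omega)
      have heq : pval σ p = pval σ (1 + (2 * n + 1 - pval σ p)) := by omega
      have := pval_inj σ (i := p) (j := 1 + (2 * n + 1 - pval σ p))
        (by omega) hp2 (by omega) (by omega) heq
      omega
    rintro ⟨i, j, k, hi1, hij, hjk, hk2n, e1, e2⟩
    have hbi := pval_bounds σ (i := i) (by omega) (by omega)
    have hbj := pval_bounds σ (i := j) (by omega) (by omega)
    have hbk := pval_bounds σ (i := k) (by omega) (by omega)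
    rcases Nat.lt_or_ge k (l + 2) with hkH | hkMi0
    · -- k in head: j, k in the decreasing run
      have hvj := h2a (j - 1) (by omega) (by omega)
      have hvk := h2a (k - 1) (by omega) (by omega)
      rw [show 1 + (j - 1) = j by omega] at hvj
      rw [show 1 + (k - 1) = k by omega] at hvk
      omega
    · rcases Nat.lt_or_ge k (2 * n - l) with hkMi | hkT
      · -- k in middle
        have hml : l + 2 ≤ n := by omega
        have hm1 := h3 hml
        have hvk := hZ2 k (by omega) (by omega)
        have hjMi : l + 2 ≤ j := by
          by_contra hc
          push_neg at hc
          have hvj := h2a (j - 1) (by omega) (by omega)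
          rw [show 1 + (j - 1) = j by omega] at hvj
          omega
        rcases Nat.lt_or_ge i (l + 2) with hiH | hiMi
        · rcases Nat.eq_or_lt_of_le hi1 with hieq | hi2
          · subst hieq
            rcases Nat.eq_or_lt_of_le hjMi with hjeq | hjgt
            · rw [← hjeq] at e1
              omega
            · exact hF6 (l + 2) j k le_rfl (by omega) hjk (by omega) (by omega) e2
          · have hvi := h2a (i - 1) (by omega) (by omega)
            rw [show 1 + (i - 1) = i by omega] at hvi
            omega
        · exact hF6 i j k hiMi hij hjk (by omega) e1 e2
      · rcases Nat.lt_or_ge k (2 * n) with hkT1 | hkT2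
        · -- k in tail run of small values
          have hvk := hT (2 * n - k) (by omega) (by omega)
          rw [show 2 * n - (2 * n - k) = k by omega] at hvk
          have hvjz := hZ1 j (by omega) (by omega) (by omega)
          omega
        · -- k = 2n
          have hkeq : k = 2 * n := by omega
          subst hkeq
          rcases Nat.lt_or_ge j (l + 2) with hjH | hjMi0
          · have hvj := h2a (j - 1) (by omega) (by omega)
            rw [show 1 + (j - 1) = j by omega] at hvj
            omega
          · rcases Nat.lt_or_ge j (2 * n - l) with hjMi | hjT
            · -- j in middle
              have hml : l + 2 ≤ n := by omega
              have hm1 := h3 hml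
              have hmlast : pval σ (l + 2) + pval σ (2 * n - l - 1) = 2 * n + 1 := by
                have hc := hσ (l + 2) (by omega) (by omega)
                have harg : 2 * n + 1 - (l + 2) = 2 * n - l - 1 := by omega
                rwa [harg] at hc
              rcases Nat.lt_or_ge i (l + 2) with hiH | hiMi
              · rcases Nat.eq_or_lt_of_le hi1 with hieq | hi2
                · subst hieq
                  omega
                · have hvi := h2a (i - 1) (by omega) (by omega)
                  rw [show 1 + (i - 1) = i by omega] at hvi
                  omega
              · rcases Nat.eq_or_lt_of_le (show j ≤ 2 * n - l - 1 by omega) with hjeq | hjlt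
                · rw [hjeq] at e2
                  omega
                · exact hF6 i j (2 * n - l - 1) hiMi hij (by omega) le_rfl e1 (by omega)
            · -- j in tail run
              have hvj := hT (2 * n - j) (by omega) (by omega)
              rw [show 2 * n - (2 * n - j) = j by omega] at hvj
              have hviz := hZ1 i (by omega) (by omega) (by omega)
              omega
end

section
/- For n ≥ 1, define a map from C_{2n}(132) to S_{2n+1} by sending σ to α, where: α(n+1) = n+1; for 1 ≤ i ≤ n, α(i) = σ(i) if σ(i) ≤ n and α(i) = σ(i)+1 if σ(i) > n; and for n+2 ≤ i ≤ 2n+1, α(i) = σ(i−1) if σ(i−1) ≤ n and α(i) = σ(i−1)+1 if σ(i−1) > n. Then this map is a bijection from C_{2n}(132) onto C_{2n+1}(132), and moreover des(α) = des(σ) if des(σ) is even, while des(α) = des(σ)+1 if des(σ) is odd. -/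
/-- `α ∈ S_{2n+1}` is the image of `σ ∈ S_{2n}` under the insertion map:
`α(n+1) = n+1`, `α(i)` is `σ(i)` bumped by one if `σ(i) > n` for `i ≤ n`, and
`α(i)` is `σ(i−1)` bumped by one if `σ(i−1) > n` for `i ≥ n+2`. -/
def BijRel (n : ℕ) (σ : Equiv.Perm (Fin (2 * n))) (α : Equiv.Perm (Fin (2 * n + 1))) : Prop :=
  pval α (n + 1) = n + 1 ∧
  (∀ i, 1 ≤ i → i ≤ n →
    pval α i = if pval σ i ≤ n then pval σ i else pval σ i + 1) ∧
  (∀ i, n + 2 ≤ i → i ≤ 2 * n + 1 →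
    pval α i = if pval σ (i - 1) ≤ n then pval σ (i - 1) else pval σ (i - 1) + 1)


namespace S17

/-! ### Generic `pval` lemmas -/

lemma pval_eq {K : ℕ} (σ : Equiv.Perm (Fin K)) {i : ℕ} (h1 : 1 ≤ i) (h2 : i ≤ K) :
    pval σ i = (σ ⟨i - 1, by omega⟩ : ℕ) + 1 := by
  unfold pval; rw [dif_pos]

lemma pval_lb {K : ℕ} (σ : Equiv.Perm (Fin K)) {i : ℕ} (h1 : 1 ≤ i) (h2 : i ≤ K) :
    1 ≤ pval σ i := by
  rw [pval_eq σ h1 h2]; omega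

lemma pval_ub {K : ℕ} (σ : Equiv.Perm (Fin K)) {i : ℕ} (h1 : 1 ≤ i) (h2 : i ≤ K) :
    pval σ i ≤ K := by
  rw [pval_eq σ h1 h2]
  have := (σ ⟨i - 1, by omega⟩).isLt
  omega

lemma pval_injOn {K : ℕ} (σ : Equiv.Perm (Fin K)) {i j : ℕ} (hi1 : 1 ≤ i) (hi2 : i ≤ K)
    (hj1 : 1 ≤ j) (hj2 : j ≤ K) (h : pval σ i = pval σ j) : i = j := by
  rw [pval_eq σ hi1 hi2, pval_eq σ hj1 hj2] at h
  have h2 : (⟨i - 1, by omega⟩ : Fin K) = ⟨j - 1, by omega⟩ :=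
    σ.injective (Fin.ext (by omega))
  have := congrArg Fin.val h2
  simp only at this
  omega

lemma pval_succ {K : ℕ} (σ : Equiv.Perm (Fin K)) (j : Fin K) :
    pval σ ((j : ℕ) + 1) = (σ j : ℕ) + 1 := by
  have hj := j.isLt
  rw [pval_eq σ (by omega) (by omega)]
  have : (⟨(j : ℕ) + 1 - 1, by omega⟩ : Fin K) = j := Fin.ext (by simp)
  rw [this]

lemma perm_eq_of_pval {K : ℕ} {σ τ : Equiv.Perm (Fin K)}
    (h : ∀ i, 1 ≤ i → i ≤ K → pval σ i = pval τ i) : σ = τ := by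
  apply Equiv.ext
  intro j
  have hj := j.isLt
  have := h ((j : ℕ) + 1) (by omega) (by omega)
  rw [pval_succ, pval_succ] at this
  exact Fin.ext (by omega)

/-! ### The insertion map -/

variable {n : ℕ}

def mid (n : ℕ) : Fin (2 * n + 1) := ⟨n, by omega⟩

def ins (n : ℕ) (σ : Equiv.Perm (Fin (2 * n))) : Equiv.Perm (Fin (2 * n + 1)) :=
  (finSuccEquiv' (mid n)).trans (σ.optionCongr.trans (finSuccEquiv' (mid n)).symm)

lemma ins_mid (σ : Equiv.Perm (Fin (2 * n))) : ins n σ (mid n) = mid n := by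
  simp [ins, finSuccEquiv'_at, finSuccEquiv'_symm_none]

lemma ins_succAbove (σ : Equiv.Perm (Fin (2 * n))) (i : Fin (2 * n)) :
    ins n σ ((mid n).succAbove i) = (mid n).succAbove (σ i) := by
  simp [ins, finSuccEquiv'_succAbove, finSuccEquiv'_symm_some]

lemma coe_succAbove (i : Fin (2 * n)) :
    (((mid n).succAbove i : Fin (2 * n + 1)) : ℕ) =
      if (i : ℕ) < n then (i : ℕ) else (i : ℕ) + 1 := by
  rw [Fin.succAbove]
  simp only [Fin.lt_def, Fin.coe_castSucc, mid]
  split <;> simp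

lemma bijRel_ins (hn : 1 ≤ n) (σ : Equiv.Perm (Fin (2 * n))) : BijRel n σ (ins n σ) := by
  refine ⟨?_, ?_, ?_⟩
  · rw [pval_eq _ (by omega) (by omega)]
    have e : (⟨n + 1 - 1, by omega⟩ : Fin (2 * n + 1)) = mid n := Fin.ext (by simp [mid])
    rw [e, ins_mid]; simp [mid]
  · intro i h1 h2
    rw [pval_eq _ h1 (by omega), pval_eq _ h1 (by omega)]
    have e : (⟨i - 1, by omega⟩ : Fin (2 * n + 1)) =
        (mid n).succAbove (⟨i - 1, by omega⟩ : Fin (2 * n)) := by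
      apply Fin.ext
      rw [coe_succAbove]
      simp only []
      rw [if_pos (by omega)]
    rw [e, ins_succAbove, coe_succAbove]
    split <;> split <;> omega
  · intro i h1 h2
    rw [pval_eq _ (by omega) (by omega), pval_eq _ (by omega) (by omega)]
    have e : (⟨i - 1, by omega⟩ : Fin (2 * n + 1)) =
        (mid n).succAbove (⟨i - 2, by omega⟩ : Fin (2 * n)) := by
      apply Fin.ext
      rw [coe_succAbove]
      simp only []
      rw [if_neg (by omega)]
      omega
    rw [e, ins_succAbove, coe_succAbove]
    have e2 : (⟨i - 1 - 1, by omega⟩ : Fin (2 * n)) = ⟨i - 2, by omega⟩ := by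
      simp only [Fin.mk.injEq]; omega
    rw [e2]
    split <;> split <;> omega

lemma exists_ins_eq (α : Equiv.Perm (Fin (2 * n + 1))) (hm : α (mid n) = mid n) :
    ∃ σ : Equiv.Perm (Fin (2 * n)), ins n σ = α := by
  set e := finSuccEquiv' (mid n) with he
  set β : Option (Fin (2 * n)) ≃ Option (Fin (2 * n)) := (e.symm.trans α).trans e with hb
  have hβnone : β none = none := by
    simp [hb, he, Equiv.trans_apply, finSuccEquiv'_symm_none, hm, finSuccEquiv'_at]
  refine ⟨Equiv.removeNone β, ?_⟩
  apply Equiv.ext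
  intro x
  by_cases hx : x = mid n
  · subst hx; rw [ins_mid, hm]
  · obtain ⟨i, rfl⟩ := Fin.exists_succAbove_eq hx
    rw [ins_succAbove]
    have hsome : ∃ y, β (some i) = some y := by
      rcases h : β (some i) with _ | y
      · exfalso
        have := β.injective (h.trans hβnone.symm)
        simp at this
      · exact ⟨y, rfl⟩
    have h1 : some (Equiv.removeNone β i) = β (some i) := Equiv.removeNone_some β hsome
    have h2 : β (some i) = e (α ((mid n).succAbove i)) := by
      simp [hb, Equiv.trans_apply, he, finSuccEquiv'_symm_some]
    rw [h2] at h1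
    have := congrArg e.symm h1
    rw [Equiv.symm_apply_apply] at this
    rw [← this, he, finSuccEquiv'_symm_some]

/-! ### Uniqueness -/

variable {σ σ' : Equiv.Perm (Fin (2 * n))} {α α' : Equiv.Perm (Fin (2 * n + 1))}

lemma bijRel_unique (hrel : BijRel n σ α) (hrel' : BijRel n σ α') : α = α' := by
  apply perm_eq_of_pval
  intro i h1 h2
  rcases lt_trichotomy i (n + 1) with h | h | h
  · rw [hrel.2.1 i h1 (by omega), hrel'.2.1 i h1 (by omega)]
  · subst h; rw [hrel.1, hrel'.1]
  · rw [hrel.2.2 i (by omega) h2, hrel'.2.2 i (by omega) h2]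

lemma sigma_unique (hrel : BijRel n σ α) (hrel' : BijRel n σ' α) : σ = σ' := by
  apply perm_eq_of_pval
  intro i h1 h2
  rcases le_or_gt i n with h | h
  · have e := hrel.2.1 i h1 h
    have e' := hrel'.2.1 i h1 h
    rw [e] at e'
    split_ifs at e' <;> omega
  · have e := hrel.2.2 (i + 1) (by omega) (by omega)
    have e' := hrel'.2.2 (i + 1) (by omega) (by omega)
    rw [show i + 1 - 1 = i from by omega] at e e'
    rw [e] at e'
    split_ifs at e' <;> omega

/-! ### Centrosymmetry transfer -/

lemma centro_up (hrel : BijRel n σ α) (hc : IsCentro σ) : IsCentro α := by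
  obtain ⟨h0, hL, hR⟩ := hrel
  intro i hi1 hi2
  rcases lt_trichotomy i (n + 1) with hi | hi | hi
  · have e1 := hL i hi1 (by omega)
    have e2 := hR (2 * n + 1 + 1 - i) (by omega) (by omega)
    rw [show 2 * n + 1 + 1 - i - 1 = 2 * n + 1 - i from by omega] at e2
    have hcc := hc i hi1 (by omega)
    have b1 := pval_lb σ (i := i) hi1 (by omega)
    have b2 := pval_ub σ (i := i) hi1 (by omega)
    have b3 := pval_lb σ (i := 2 * n + 1 - i) (by omega) (by omega)
    rw [e1, e2]
    split <;> split <;> omega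
  · subst hi
    rw [show 2 * n + 1 + 1 - (n + 1) = n + 1 from by omega, h0]
    omega
  · have e1 := hR i (by omega) hi2
    have e2 := hL (2 * n + 1 + 1 - i) (by omega) (by omega)
    have hcc := hc (i - 1) (by omega) (by omega)
    rw [show 2 * n + 1 - (i - 1) = 2 * n + 1 + 1 - i from by omega] at hcc
    have b1 := pval_lb σ (i := i - 1) (by omega) (by omega)
    have b2 := pval_ub σ (i := i - 1) (by omega) (by omega)
    have b3 := pval_lb σ (i := 2 * n + 1 + 1 - i) (by omega) (by omega)
    rw [e1, e2]
    split <;> split <;> omega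

lemma centro_down (hn : 1 ≤ n) (hrel : BijRel n σ α) (hcα : IsCentro α) : IsCentro σ := by
  obtain ⟨h0, hL, hR⟩ := hrel
  have key : ∀ i, 1 ≤ i → i ≤ n → pval σ i + pval σ (2 * n + 1 - i) = 2 * n + 1 := by
    intro i h1 h2
    have e1 := hL i h1 h2
    have e2 := hR (2 * n + 1 + 1 - i) (by omega) (by omega)
    rw [show 2 * n + 1 + 1 - i - 1 = 2 * n + 1 - i from by omega] at e2
    have hcc := hcα i h1 (by omega)
    rw [e1, e2] at hcc
    have b1 := pval_lb σ (i := i) h1 (by omega)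
    have b2 := pval_ub σ (i := i) h1 (by omega)
    have b3 := pval_lb σ (i := 2 * n + 1 - i) (by omega) (by omega)
    have b4 := pval_ub σ (i := 2 * n + 1 - i) (by omega) (by omega)
    split_ifs at hcc <;> omega
  intro i h1 h2
  rcases le_or_gt i n with h | h
  · exact key i h1 h
  · have := key (2 * n + 1 - i) (by omega) (by omega)
    rw [show 2 * n + 1 - (2 * n + 1 - i) = i from by omega] at this
    omega

/-! ### 132-avoidance transfer -/

lemma avoid_down (hrel : BijRel n σ α) (hav : Avoids132 α) : Avoids132 σ := by
  obtain ⟨h0, hL, hR⟩ := hrel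
  have trans : ∀ p, 1 ≤ p → p ≤ 2 * n →
      pval α (if p ≤ n then p else p + 1) =
        (if pval σ p ≤ n then pval σ p else pval σ p + 1) := by
    intro p h1 h2
    by_cases hp : p ≤ n
    · rw [if_pos hp]; exact hL p h1 hp
    · rw [if_neg hp]
      have := hR (p + 1) (by omega) (by omega)
      rw [show p + 1 - 1 = p from by omega] at this
      exact this
  rintro ⟨i, j, k, hi1, hij, hjk, hk, v1, v2⟩
  apply hav
  refine ⟨if i ≤ n then i else i + 1, if j ≤ n then j else j + 1, if k ≤ n then k else k + 1,
    ?_, ?_, ?_, ?_, ?_, ?_⟩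
  · split <;> omega
  · split <;> split <;> omega
  · split <;> split <;> omega
  · split <;> omega
  · rw [trans i hi1 (by omega), trans k (by omega) hk]
    split <;> split <;> omega
  · rw [trans j (by omega) (by omega), trans k (by omega) hk]
    split <;> split <;> omega

lemma avoid_up (hn : 1 ≤ n) (hrel : BijRel n σ α) (hc : IsCentro σ) (hav : Avoids132 σ) :
    Avoids132 α := by
  obtain ⟨h0, hL, hR⟩ := hrel
  have trans : ∀ p, 1 ≤ p → p ≤ 2 * n + 1 → p ≠ n + 1 →
      pval α p = (if pval σ (if p ≤ n then p else p - 1) ≤ n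
        then pval σ (if p ≤ n then p else p - 1)
        else pval σ (if p ≤ n then p else p - 1) + 1) := by
    intro p h1 h2 h3
    by_cases hp : p ≤ n
    · simp only [if_pos hp]; exact hL p h1 hp
    · simp only [if_neg hp]; exact hR p (by omega) h2
  rintro ⟨i, j, k, hi1, hij, hjk, hk, v1, v2⟩
  by_cases cj : j = n + 1
  · subst cj
    have ei := trans i hi1 (by omega) (by omega)
    have ek := trans k (by omega) hk (by omega)
    rw [if_pos (show i ≤ n by omega)] at ei
    rw [if_neg (show ¬ k ≤ n by omega)] at ek
    rw [ei, ek] at v1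
    rw [ek, h0] at v2
    have f1 : pval σ (k - 1) ≤ n := by split_ifs at v2 <;> omega
    have f2 : pval σ i < pval σ (k - 1) := by split_ifs at v1 <;> omega
    have c1 := hc (k - 1) (by omega) (by omega)
    have c2 := hc i hi1 (by omega)
    have b1 := pval_lb σ (i := k - 1) (by omega) (by omega)
    have b2 := pval_lb σ (i := i) hi1 (by omega)
    rcases lt_trichotomy i (2 * n + 1 - (k - 1)) with h | h | h
    · exact hav ⟨i, 2 * n + 1 - (k - 1), k - 1, hi1, h, by omega, by omega, f2, by omega⟩
    · exfalso
      have := congrArg (pval σ) h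
      omega
    · exact hav ⟨i, 2 * n + 1 - i, k - 1, hi1, by omega, by omega, by omega, f2, by omega⟩
  by_cases ci : i = n + 1
  · subst ci
    have ej := trans j (by omega) (by omega) (by omega)
    have ek := trans k (by omega) hk (by omega)
    rw [if_neg (show ¬ j ≤ n by omega)] at ej
    rw [if_neg (show ¬ k ≤ n by omega)] at ek
    rw [h0, ek] at v1
    rw [ek, ej] at v2
    have f1 : n < pval σ (k - 1) := by split_ifs at v1 <;> omega
    have f2 : pval σ (k - 1) < pval σ (j - 1) := by split_ifs at v2 <;> omega
    have c1 := hc (j - 1) (by omega) (by omega)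
    exact hav ⟨2 * n + 1 - (j - 1), j - 1, k - 1, by omega, by omega, by omega, by omega,
      by omega, f2⟩
  by_cases ck : k = n + 1
  · subst ck
    have ei := trans i hi1 (by omega) ci
    have ej := trans j (by omega) (by omega) cj
    rw [if_pos (show i ≤ n by omega)] at ei
    rw [if_pos (show j ≤ n by omega)] at ej
    rw [ei, h0] at v1
    rw [h0, ej] at v2
    have f1 : pval σ i ≤ n := by split_ifs at v1 <;> omega
    have f2 : n < pval σ j := by split_ifs at v2 <;> omega
    have c1 := hc j (by omega) (by omega)
    have c2 := hc i hi1 (by omega)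
    have b1 := pval_lb σ (i := i) hi1 (by omega)
    have b2 := pval_ub σ (i := j) (by omega) (by omega)
    rcases lt_trichotomy (pval σ i) (pval σ (2 * n + 1 - j)) with h | h | h
    · exact hav ⟨i, j, 2 * n + 1 - j, hi1, hij, by omega, by omega, h, by omega⟩
    · exfalso
      have := pval_injOn σ hi1 (by omega) (by omega) (by omega) h
      omega
    · exact hav ⟨i, j, 2 * n + 1 - i, hi1, hij, by omega, by omega, by omega, by omega⟩
  · have ei := trans i hi1 (by omega) ci
    have ej := trans j (by omega) (by omega) cj
    have ek := trans k (by omega) hk ck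
    rw [ei, ek] at v1
    rw [ek, ej] at v2
    apply hav
    refine ⟨if i ≤ n then i else i - 1, if j ≤ n then j else j - 1, if k ≤ n then k else k - 1,
      ?_, ?_, ?_, ?_, ?_, ?_⟩
    · split <;> omega
    · split <;> split <;> omega
    · split <;> split <;> omega
    · split <;> omega
    · split_ifs at v1 ⊢ <;> omega
    · split_ifs at v2 ⊢ <;> omega

/-! ### Descents -/

lemma des_eq_card {K : ℕ} (σ : Equiv.Perm (Fin K)) :
    des σ = ((Finset.Icc 1 (K - 1)).filter (fun i => pval σ (i + 1) < pval σ i)).card := by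
  have h : {i : ℕ | 1 ≤ i ∧ i + 1 ≤ K ∧ pval σ (i + 1) < pval σ i} =
      ↑((Finset.Icc 1 (K - 1)).filter (fun i => pval σ (i + 1) < pval σ i)) := by
    ext i
    simp only [Set.mem_setOf_eq, Finset.coe_filter, Finset.mem_Icc]
    constructor
    · rintro ⟨a, b, c⟩; exact ⟨⟨a, by omega⟩, c⟩
    · rintro ⟨⟨a, b⟩, c⟩; exact ⟨a, by omega, c⟩
  have h2 : des σ = Set.ncard {i : ℕ | 1 ≤ i ∧ i + 1 ≤ K ∧ pval σ (i + 1) < pval σ i} :=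
    Nat.card_coe_set_eq _
  rw [h2, h, Set.ncard_coe_finset]

lemma des_formula (hn : 1 ≤ n) (hrel : BijRel n σ α) (hc : IsCentro σ) :
    des α = if des σ % 2 = 0 then des σ else des σ + 1 := by
  obtain ⟨h0, hL, hR⟩ := hrel
  have cmid := hc n hn (by omega)
  rw [show 2 * n + 1 - n = n + 1 from by omega] at cmid
  have hAcard :
      ((Finset.Icc (n + 1) (2 * n - 1)).filter (fun i => pval σ (i + 1) < pval σ i)).card =
      ((Finset.Icc 1 (n - 1)).filter (fun i => pval σ (i + 1) < pval σ i)).card := by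
    apply Finset.card_nbij' (i := fun a => 2 * n - a) (j := fun b => 2 * n - b)
    · intro a ha
      simp only [Finset.mem_coe, Finset.mem_filter, Finset.mem_Icc] at ha ⊢
      obtain ⟨⟨ha1, ha2⟩, ha3⟩ := ha
      have c1 := hc a (by omega) (by omega)
      have c2 := hc (a + 1) (by omega) (by omega)
      rw [show 2 * n + 1 - a = 2 * n - a + 1 from by omega] at c1
      rw [show 2 * n + 1 - (a + 1) = 2 * n - a from by omega] at c2
      exact ⟨⟨by omega, by omega⟩, by omega⟩
    · intro a ha
      simp only [Finset.mem_coe, Finset.mem_filter, Finset.mem_Icc] at ha ⊢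
      obtain ⟨⟨ha1, ha2⟩, ha3⟩ := ha
      have c1 := hc a (by omega) (by omega)
      have c2 := hc (a + 1) (by omega) (by omega)
      rw [show 2 * n + 1 - a = 2 * n - a + 1 from by omega] at c1
      rw [show 2 * n + 1 - (a + 1) = 2 * n - a from by omega] at c2
      exact ⟨⟨by omega, by omega⟩, by omega⟩
    · intro a ha
      simp only [Finset.mem_coe, Finset.mem_filter, Finset.mem_Icc] at ha
      beta_reduce
      omega
    · intro a ha
      simp only [Finset.mem_coe, Finset.mem_filter, Finset.mem_Icc] at ha
      beta_reduce
      omega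
  have hmidα1 : (pval α (n + 1) < pval α n) ↔ (n < pval σ n) := by
    have e := hL n hn le_rfl
    rw [h0, e]
    split_ifs <;> omega
  have hmidsig : (pval σ (n + 1) < pval σ n) ↔ (n < pval σ n) := by omega
  have hmidα2 : (pval α (n + 1 + 1) < pval α (n + 1)) ↔ (n < pval σ n) := by
    have e := hR (n + 1 + 1) (by omega) (by omega)
    rw [show n + 1 + 1 - 1 = n + 1 from by omega] at e
    rw [h0, e]
    split_ifs <;> omega
  have hAα :
      ((Finset.Icc 1 (n - 1)).filter (fun i => pval α (i + 1) < pval α i)).card =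
      ((Finset.Icc 1 (n - 1)).filter (fun i => pval σ (i + 1) < pval σ i)).card := by
    congr 1
    apply Finset.filter_congr
    intro x hx
    simp only [Finset.mem_Icc] at hx
    rw [hL x (by omega) (by omega), hL (x + 1) (by omega) (by omega)]
    split_ifs <;> omega
  have hBα :
      ((Finset.Icc (n + 2) (2 * n)).filter (fun i => pval α (i + 1) < pval α i)).card =
      ((Finset.Icc (n + 1) (2 * n - 1)).filter (fun i => pval σ (i + 1) < pval σ i)).card := by
    apply Finset.card_nbij' (i := fun a => a - 1) (j := fun b => b + 1)
    · intro a ha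
      simp only [Finset.mem_coe, Finset.mem_filter, Finset.mem_Icc] at ha ⊢
      obtain ⟨⟨ha1, ha2⟩, ha3⟩ := ha
      have e1 := hR a (by omega) (by omega)
      have e2 := hR (a + 1) (by omega) (by omega)
      rw [show a + 1 - 1 = a from by omega] at e2
      rw [e1, e2] at ha3
      refine ⟨⟨by omega, by omega⟩, ?_⟩
      rw [show a - 1 + 1 = a from by omega]
      split_ifs at ha3 <;> omega
    · intro a ha
      simp only [Finset.mem_coe, Finset.mem_filter, Finset.mem_Icc] at ha ⊢
      obtain ⟨⟨ha1, ha2⟩, ha3⟩ := ha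
      have e1 := hR (a + 1) (by omega) (by omega)
      have e2 := hR (a + 1 + 1) (by omega) (by omega)
      rw [show a + 1 - 1 = a from by omega] at e1
      rw [show a + 1 + 1 - 1 = a + 1 from by omega] at e2
      refine ⟨⟨by omega, by omega⟩, ?_⟩
      rw [e1, e2]
      split_ifs <;> omega
    · intro a ha
      simp only [Finset.mem_coe, Finset.mem_filter, Finset.mem_Icc] at ha
      beta_reduce
      omega
    · intro a ha
      simp only [Finset.mem_coe, Finset.mem_filter, Finset.mem_Icc] at ha
      beta_reduce
      omega
  have hdσ : des σ =
      2 * ((Finset.Icc 1 (n - 1)).filter (fun i => pval σ (i + 1) < pval σ i)).card +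
      (if n < pval σ n then 1 else 0) := by
    rw [des_eq_card σ]
    have hsplit : Finset.Icc 1 (2 * n - 1) =
        (Finset.Icc 1 (n - 1) ∪ {n}) ∪ Finset.Icc (n + 1) (2 * n - 1) := by
      ext x
      simp only [Finset.mem_Icc, Finset.mem_union, Finset.mem_singleton]
      omega
    rw [hsplit, Finset.filter_union, Finset.filter_union,
      Finset.card_union_of_disjoint, Finset.card_union_of_disjoint]
    · rw [Finset.filter_singleton]
      have : (if pval σ (n + 1) < pval σ n then ({n} : Finset ℕ) else ∅).card =
          (if n < pval σ n then 1 else 0) := by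
        rw [if_congr hmidsig rfl rfl]
        split_ifs <;> simp
      rw [this, hAcard]
      ring
    · rw [Finset.disjoint_left]
      intro a ha hb
      simp only [Finset.mem_union, Finset.mem_filter, Finset.mem_Icc,
        Finset.mem_singleton] at ha hb
      omega
    · rw [Finset.disjoint_left]
      intro a ha hb
      simp only [Finset.mem_union, Finset.mem_filter, Finset.mem_Icc,
        Finset.mem_singleton] at ha hb
      omega
  have hdα : des α =
      2 * ((Finset.Icc 1 (n - 1)).filter (fun i => pval σ (i + 1) < pval σ i)).card +
      2 * (if n < pval σ n then 1 else 0) := by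
    rw [des_eq_card α]
    rw [show 2 * n + 1 - 1 = 2 * n from by omega]
    have hsplit : Finset.Icc 1 (2 * n) =
        ((Finset.Icc 1 (n - 1) ∪ {n}) ∪ {n + 1}) ∪ Finset.Icc (n + 2) (2 * n) := by
      ext x
      simp only [Finset.mem_Icc, Finset.mem_union, Finset.mem_singleton]
      omega
    rw [hsplit, Finset.filter_union, Finset.filter_union, Finset.filter_union,
      Finset.card_union_of_disjoint, Finset.card_union_of_disjoint,
      Finset.card_union_of_disjoint]
    · rw [Finset.filter_singleton, Finset.filter_singleton]
      have e1 : (if pval α (n + 1) < pval α n then ({n} : Finset ℕ) else ∅).card =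
          (if n < pval σ n then 1 else 0) := by
        rw [if_congr hmidα1 rfl rfl]
        split_ifs <;> simp
      have e2 : (if pval α (n + 1 + 1) < pval α (n + 1) then ({n + 1} : Finset ℕ) else ∅).card =
          (if n < pval σ n then 1 else 0) := by
        rw [if_congr hmidα2 rfl rfl]
        split_ifs <;> simp
      rw [e1, e2, hAα, hBα, hAcard]
      ring
    · rw [Finset.disjoint_left]
      intro a ha hb
      simp only [Finset.mem_union, Finset.mem_filter, Finset.mem_Icc,
        Finset.mem_singleton] at ha hb
      omega
    · rw [Finset.disjoint_left]
      intro a ha hb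
      simp only [Finset.mem_union, Finset.mem_filter, Finset.mem_Icc,
        Finset.mem_singleton] at ha hb
      omega
    · rw [Finset.disjoint_left]
      intro a ha hb
      simp only [Finset.mem_union, Finset.mem_filter, Finset.mem_Icc,
        Finset.mem_singleton] at ha hb
      omega
  by_cases hm : n < pval σ n
  · rw [if_pos hm] at hdσ hdα
    rw [if_neg (by omega)]
    omega
  · rw [if_neg hm] at hdσ hdα
    rw [if_pos (by omega)]
    omega

lemma alpha_mid (hcα : IsCentro α) : α (mid n) = mid n := by
  have h := hcα (n + 1) (by omega) (by omega)
  rw [show 2 * n + 1 + 1 - (n + 1) = n + 1 from by omega] at h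
  have h2 : pval α (n + 1) = n + 1 := by omega
  rw [pval_eq α (by omega) (by omega)] at h2
  have e : (⟨n + 1 - 1, by omega⟩ : Fin (2 * n + 1)) = mid n := by
    apply Fin.ext; simp [mid]
  rw [e] at h2
  apply Fin.ext
  have hv : ((mid n : Fin (2 * n + 1)) : ℕ) = n := rfl
  omega

end S17

/-- the insertion map is a well-defined bijection from `C_{2n}(132)`
onto `C_{2n+1}(132)`, and `des α = des σ` if `des σ` is even while
`des α = des σ + 1` if `des σ` is odd. -/


theorem stmt17 (n : ℕ) (hn : 1 ≤ n) :
    (∀ σ : Equiv.Perm (Fin (2 * n)), IsCentro σ → Avoids132 σ →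
      ∃! α : Equiv.Perm (Fin (2 * n + 1)), BijRel n σ α) ∧
    (∀ (σ : Equiv.Perm (Fin (2 * n))) (α : Equiv.Perm (Fin (2 * n + 1))),
      IsCentro σ → Avoids132 σ → BijRel n σ α →
        IsCentro α ∧ Avoids132 α ∧
        des α = (if des σ % 2 = 0 then des σ else des σ + 1)) ∧
    (∀ α : Equiv.Perm (Fin (2 * n + 1)), IsCentro α → Avoids132 α →
      ∃! σ : Equiv.Perm (Fin (2 * n)), IsCentro σ ∧ Avoids132 σ ∧ BijRel n σ α) := by
  refine ⟨?_, ?_, ?_⟩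
  · intro σ _ _
    exact ⟨S17.ins n σ, S17.bijRel_ins hn σ,
      fun α' h' => S17.bijRel_unique h' (S17.bijRel_ins hn σ)⟩
  · intro σ α hc hav hrel
    exact ⟨S17.centro_up hrel hc, S17.avoid_up hn hrel hc hav, S17.des_formula hn hrel hc⟩
  · intro α hcα havα
    have hm : α (S17.mid n) = S17.mid n := S17.alpha_mid hcα
    obtain ⟨σ, hσ⟩ := S17.exists_ins_eq α hm
    have hrel : BijRel n σ α := by rw [← hσ]; exact S17.bijRel_ins hn σ
    exact ⟨σ, ⟨S17.centro_down hn hrel hcα, S17.avoid_down hrel havα, hrel⟩,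
      fun σ' h' => S17.sigma_unique h'.2.2 hrel⟩
end
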